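/- arXiv:1210.2995 — 4 statements merged into one kernel-verified Lean document; each statement's English description precedes it below -/
import Mathlib

section
/- Under the identification K((t)) = ∪_{j∈ℤ} t^j K[[t]], where each subspace t^j K[[t]] is K-linearly isomorphic to the countable product K^ℕ and carries the product topology, the higher topology on K((t)) coincides with the strict inductive limit topology (the finest locally convex topology making every inclusion t^j K[[t]] ↪ K((t)) continuous). -/
/-!
Common setting: `K` is a characteristic-zero local field (a finite extension of `ℚ_p`)
with ring of integers `𝒪 = {c : K | ‖c‖ ≤ 1}`, maximal ideal `𝔭 = {c : K | ‖c‖ < 1}`,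
residue field of cardinality `q` and the absolute value normalised by `‖π‖ = q⁻¹`.
We formalise the two-dimensional local fields `K((t))` (as `LaurentSeries K`) and
`K{{t}}` (as the submodule `mixedCarrier K` of `ℤ → K`), their higher topologies, and
the relevant functional-analytic notions (lattices, seminorms, boundedness,
c-compactness, compactoidness, completeness for nets, duality).
-/

open Filter Topology Set Pointwise
open scoped Classical

noncomputable section

namespace TwoDimLF

variable (K : Type) [NontriviallyNormedField K]

/-- `K` is a characteristic-zero nonarchimedean local field: the norm is nonarchimedean,
takes the values `q^ℤ` on `K˟` (with a uniformizer of norm `q⁻¹`), `K` is complete, locally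
compact, of characteristic zero, and the residue field has exactly `q` elements. -/
structure IsCharZeroLocalField (q : ℕ) : Prop where
  nonarch : ∀ x y : K, ‖x + y‖ ≤ max ‖x‖ ‖y‖
  one_lt_q : 1 < q
  norm_values : ∀ x : K, x ≠ 0 → ∃ n : ℤ, ‖x‖ = (q : ℝ) ^ (-n)
  exists_uniformizer : ∃ π : K, ‖π‖ = ((q : ℝ))⁻¹
  charZero : CharZero K
  locallyCompact : LocallyCompactSpace K
  complete : CompleteSpace K
  residue_card : ∃ s : Finset K, s.card = q ∧
    ∀ x : K, ‖x‖ ≤ 1 → ∃! y, y ∈ s ∧ ‖x - y‖ < 1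

/-- The fractional ideal `𝔭^n ⊆ K` for `n ∈ ℤ ∪ {-∞}`, with the convention `𝔭^(-∞) = K`. -/
def pB (q : ℕ) (n : WithBot ℤ) : Set K :=
  WithBot.recBotCoe Set.univ (fun m : ℤ => {x : K | ‖x‖ ≤ (q : ℝ) ^ (-m)}) n

/-- The fractional ideal `𝔭^n ⊆ K` for `n ∈ ℤ ∪ {∞}`, with the convention `𝔭^∞ = {0}`. -/
def pT (q : ℕ) (n : WithTop ℤ) : Set K :=
  WithTop.recTopCoe {0} (fun m : ℤ => {x : K | ‖x‖ ≤ (q : ℝ) ^ (-m)}) n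

/-- The fractional ideal `𝔭^n ⊆ K` for `n ∈ ℤ ∪ {±∞}`. -/
def pE (q : ℕ) (n : WithBot (WithTop ℤ)) : Set K :=
  WithBot.recBotCoe Set.univ (fun m : WithTop ℤ => pT K q m) n

/-- `q ^ n ∈ ℝ` for `n ∈ ℤ ∪ {-∞}`, with the convention `q^(-∞) = 0`. -/
def qpow (q : ℕ) (n : WithBot ℤ) : ℝ :=
  WithBot.recBotCoe 0 (fun m : ℤ => (q : ℝ) ^ m) n

/-- `1 - k` for `k ∈ ℤ ∪ {±∞}` (so `1 - (±∞) = ∓∞`). -/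
def oneSubE : WithBot (WithTop ℤ) → WithBot (WithTop ℤ) :=
  WithBot.recBotCoe ((⊤ : WithTop ℤ) : WithBot (WithTop ℤ))
    (WithTop.recTopCoe (⊥ : WithBot (WithTop ℤ))
      (fun z : ℤ => (((1 - z : ℤ) : WithTop ℤ) : WithBot (WithTop ℤ))))

section LCS

variable {V : Type} [AddCommGroup V] [Module K V]

/-- `S` is an `𝒪`-submodule of the `K`-vector space `V`, where `𝒪 = {c : K | ‖c‖ ≤ 1}`
is the ring of integers of `K`. -/
def IsOSubmodule (S : Set V) : Prop :=
  (0 : V) ∈ S ∧ (∀ x ∈ S, ∀ y ∈ S, x + y ∈ S) ∧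
    ∀ c : K, ‖c‖ ≤ 1 → ∀ x ∈ S, c • x ∈ S

/-- `S` is an `𝒪`-lattice in `V`: an `𝒪`-submodule such that every vector is carried
into `S` by some nonzero scalar. -/
def IsLatticeSet (S : Set V) : Prop :=
  IsOSubmodule K S ∧ ∀ v : V, ∃ a : K, a ≠ 0 ∧ a • v ∈ S

/-- A (nonarchimedean) seminorm on the `K`-vector space `V`. -/
def IsSeminorm (N : V → ℝ) : Prop :=
  (∀ (c : K) (v : V), N (c • v) = ‖c‖ * N v) ∧ ∀ v w : V, N (v + w) ≤ max (N v) (N w)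

/-- The gauge seminorm of a lattice `Λ ⊆ V`: `‖v‖_Λ = inf {‖a‖ : v ∈ aΛ}`. -/
def gaugeSeminorm (Λ : Set V) (v : V) : ℝ :=
  sInf {r : ℝ | ∃ a : K, v ∈ a • Λ ∧ r = ‖a‖}

/-- The group topology on `W` determined by a family `B` of neighbourhoods of zero:
neighbourhoods of `x` are generated by the translates `x + U`, `U ∈ B`. -/
def addTopologyOf {W : Type} [AddCommGroup W] (B : Set (Set W)) : TopologicalSpace W :=
  TopologicalSpace.mkOfNhds fun x => Filter.map (fun v => x + v) (⨅ U ∈ B, Filter.principal U)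

/-- `B` is (Von-Neumann) bounded for the locally convex topology `τ`: every open lattice
absorbs it. -/
def IsVNBounded (τ : TopologicalSpace V) (B : Set V) : Prop :=
  ∀ Λ : Set V, IsLatticeSet K Λ → IsOpen[τ] Λ → ∃ a : K, B ⊆ a • Λ

/-- The `𝒪`-submodule `A ⊆ V` is c-compact: for every decreasing filtered family of open
lattices `L i`, the canonical map `A → lim A/(L i ∩ A)` is surjective (phrased via
compatible families of representatives). -/
def IsCCompact (τ : TopologicalSpace V) (A : Set V) : Prop :=
  ∀ (ι : Type) (L : ι → Set V),
    (∀ i, IsLatticeSet K (L i) ∧ IsOpen[τ] (L i)) →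
    (∀ i j, ∃ k, L k ⊆ L i ∧ L k ⊆ L j) →
    ∀ x : ι → V, (∀ i, x i ∈ A) →
      (∀ i j, L j ⊆ L i → x j - x i ∈ L i) →
      ∃ a ∈ A, ∀ i, a - x i ∈ L i

/-- The `𝒪`-submodule `A ⊆ V` is compactoid: for every open lattice `Λ` there are finitely
many vectors `v₁, …, v_m ∈ V` with `A ⊆ Λ + 𝒪v₁ + ⋯ + 𝒪v_m`. -/
def IsCompactoid (τ : TopologicalSpace V) (A : Set V) : Prop :=
  ∀ Λ : Set V, IsLatticeSet K Λ → IsOpen[τ] Λ →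
    ∃ (m : ℕ) (v : Fin m → V),
      A ⊆ {u : V | ∃ l ∈ Λ, ∃ c : Fin m → K, (∀ j, ‖c j‖ ≤ 1) ∧ u = l + ∑ j, c j • v j}

/-- `A ⊆ V` is complete: every Cauchy net with values in `A` converges to a point of `A`
(for the topology `τ`). -/
def IsNetComplete (τ : TopologicalSpace V) (A : Set V) : Prop :=
  ∀ (ι : Type) [Preorder ι] [Nonempty ι],
    (∀ i j : ι, ∃ k, i ≤ k ∧ j ≤ k) →
    ∀ x : ι → V, (∀ i, x i ∈ A) →
      (∀ U ∈ @nhds V τ 0, ∃ i0, ∀ j ≥ i0, ∀ k ≥ i0, x j - x k ∈ U) →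
      ∃ a ∈ A, Filter.Tendsto x Filter.atTop (@nhds V τ a)

/-- `τ` makes `V` a locally convex topological `K`-vector space: it is a vector-space
topology whose filter of neighbourhoods of zero admits a basis of lattices. -/
def IsLCTVS (τ : TopologicalSpace V) : Prop :=
  @IsTopologicalAddGroup V τ _ ∧ @ContinuousSMul K V _ _ τ ∧
    ∀ S ∈ @nhds V τ 0, ∃ Λ : Set V, IsLatticeSet K Λ ∧ Λ ∈ @nhds V τ 0 ∧ Λ ⊆ S

/-- The topological dual of `(V, τ)`: continuous `K`-linear forms, as a set of functions. -/
def dualSet (τ : TopologicalSpace V) : Set (V → K) :=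
  {l | IsLinearMap K l ∧ @Continuous V K τ _ l}

/-- Basic neighbourhoods of zero for the `c`-topology on `V → K`: uniform convergence on
compactoid `𝒪`-submodules. -/
def cTopBasic (τ : TopologicalSpace V) : Set (Set (V → K)) :=
  {S | ∃ (B : Set V) (ε : ℝ), IsOSubmodule K B ∧ IsCompactoid K τ B ∧ 0 < ε ∧
    S = {l : V → K | ∀ x ∈ B, ‖l x‖ ≤ ε}}

/-- The `c`-topology (uniform convergence on compactoid `𝒪`-submodules) on `V → K`. -/
def cTop (τ : TopologicalSpace V) : TopologicalSpace (V → K) :=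
  addTopologyOf (cTopBasic K τ)

/-- The pseudo-polar `A^p = {l ∈ V' : |l(v)| < 1 for all v ∈ A}`. -/
def pseudoPolar (τ : TopologicalSpace V) (A : Set V) : Set (V → K) :=
  {l | l ∈ dualSet K τ ∧ ∀ v ∈ A, ‖l v‖ < 1}

/-- The pseudo-bipolar `A^{pp} = {v ∈ V : |l(v)| < 1 for all l ∈ A^p}`. -/
def pseudoBipolar (τ : TopologicalSpace V) (A : Set V) : Set V :=
  {v | ∀ l ∈ pseudoPolar K τ A, ‖l v‖ < 1}

end LCS

/-! ### The equal characteristic field `K((t))` -/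

/-- Basic neighbourhoods of zero for the higher topology on `K((t))`:
`Σ U_i t^i` where each `U_i` is an open neighbourhood of `0` in `K` and `U_i = K` for all
sufficiently large `i`. -/
def laurentBasic : Set (Set (LaurentSeries K)) :=
  {S | ∃ U : ℤ → Set K, (∀ i, IsOpen (U i) ∧ (0 : K) ∈ U i) ∧
    (∃ N : ℤ, ∀ i, N ≤ i → U i = Set.univ) ∧
    S = {f : LaurentSeries K | ∀ i, f.coeff i ∈ U i}}

/-- The higher topology on `K((t))`. -/
def laurentTop : TopologicalSpace (LaurentSeries K) := addTopologyOf (laurentBasic K)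

/-- `Λ = Σ_{i∈ℤ} 𝔭^{n_i} t^i ⊆ K((t))` for a sequence `(n_i) ⊆ ℤ ∪ {-∞}`. -/
def laurentLambda (q : ℕ) (n : ℤ → WithBot ℤ) : Set (LaurentSeries K) :=
  {f | ∀ i, f.coeff i ∈ pB K q (n i)}

/-- `B = Σ_{i∈ℤ} 𝔭^{k_i} t^i ⊆ K((t))` for a sequence `(k_i) ⊆ ℤ ∪ {∞}`. -/
def laurentPT (q : ℕ) (k : ℤ → WithTop ℤ) : Set (LaurentSeries K) :=
  {f | ∀ i, f.coeff i ∈ pT K q (k i)}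

/-- `A = Σ_{i∈ℤ} 𝔭^{k_i} t^i ⊆ K((t))` for a sequence `(k_i) ⊆ ℤ ∪ {±∞}`. -/
def laurentPE (q : ℕ) (k : ℤ → WithBot (WithTop ℤ)) : Set (LaurentSeries K) :=
  {f | ∀ i, f.coeff i ∈ pE K q (k i)}

/-- The admissible seminorm `‖Σ x_i t^i‖ = max_i ‖x_i‖ q^{n_i}` on `K((t))`. -/
def laurentSeminorm (q : ℕ) (n : ℤ → WithBot ℤ) (f : LaurentSeries K) : ℝ :=
  sSup {r : ℝ | ∃ i : ℤ, r = ‖f.coeff i‖ * qpow q (n i)}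

/-- The ring of integers `K[[t]] ⊆ K((t))`. -/
def laurentIntegers : Set (LaurentSeries K) := {f | ∀ i, i < 0 → f.coeff i = 0}

/-- The rank-two ring of integers `𝒪 + tK[[t]] ⊆ K((t))`. -/
def laurentRankTwo : Set (LaurentSeries K) :=
  {f | (∀ i, i < 0 → f.coeff i = 0) ∧ ‖f.coeff 0‖ ≤ 1}

/-- The pairing `γ(x)(y) = π₀(xy) = Σ_i x_i y_{-i}` on `K((t))`. -/
def laurentPairing (x y : LaurentSeries K) : K := ∑' i : ℤ, x.coeff i * y.coeff (-i)

/-! ### The mixed characteristic field `K{{t}}` -/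

/-- The underlying `K`-vector space of `K{{t}}`: functions `x : ℤ → K` (coefficients of
`Σ x_i t^i`) with `inf_i v_K(x_i) > -∞` (i.e. bounded norms) and `x_i → 0` as `i → -∞`. -/
def mixedCarrier : Submodule K (ℤ → K) where
  carrier := {x | (∃ C : ℝ, ∀ i, ‖x i‖ ≤ C) ∧ Filter.Tendsto x Filter.atBot (nhds (0 : K))}
  zero_mem' := ⟨⟨0, fun i => by simp⟩, tendsto_const_nhds⟩
  add_mem' := by
    rintro x y ⟨⟨C, hC⟩, hx⟩ ⟨⟨D, hD⟩, hy⟩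
    refine ⟨⟨C + D, fun i => (norm_add_le _ _).trans (add_le_add (hC i) (hD i))⟩, ?_⟩
    have h2 := hx.add hy
    rw [add_zero] at h2
    exact h2
  smul_mem' := by
    rintro c x ⟨⟨C, hC⟩, hx⟩
    refine ⟨⟨‖c‖ * C, fun i => ?_⟩, ?_⟩
    · have h : ‖(c • x) i‖ = ‖c‖ * ‖x i‖ := by simp [norm_smul]
      rw [h]
      exact mul_le_mul_of_nonneg_left (hC i) (norm_nonneg c)
    · have h2 := hx.const_smul c
      rw [smul_zero] at h2
      exact h2

/-- The field `K{{t}}`, as a `K`-vector space. -/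
abbrev Mt := ↥(mixedCarrier K)

/-- Basic neighbourhoods of zero for the higher topology on `K{{t}}`:
`Σ V_i t^i` where each `V_i` is an open neighbourhood of `0` in `K`, some `𝔭^c` is
contained in every `V_i`, and for every `l` eventually `𝔭^l ⊆ V_i`. -/
def mixedBasic (q : ℕ) : Set (Set (Mt K)) :=
  {S | ∃ Vs : ℤ → Set K, (∀ i, IsOpen (Vs i) ∧ (0 : K) ∈ Vs i) ∧
    (∃ c : ℤ, ∀ i, {x : K | ‖x‖ ≤ (q : ℝ) ^ (-c)} ⊆ Vs i) ∧
    (∀ l : ℤ, ∃ i0 : ℤ, ∀ i, i0 ≤ i → {x : K | ‖x‖ ≤ (q : ℝ) ^ (-l)} ⊆ Vs i) ∧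
    S = {f : Mt K | ∀ i, f.1 i ∈ Vs i}}

/-- The higher topology on `K{{t}}`. -/
def mixedTop (q : ℕ) : TopologicalSpace (Mt K) := addTopologyOf (mixedBasic K q)

/-- `Λ = Σ_{i∈ℤ} 𝔭^{n_i} t^i ⊆ K{{t}}` for a sequence `(n_i) ⊆ ℤ ∪ {-∞}`. -/
def mixedLambda (q : ℕ) (n : ℤ → WithBot ℤ) : Set (Mt K) :=
  {f | ∀ i, f.1 i ∈ pB K q (n i)}

/-- `B = Σ_{i∈ℤ} 𝔭^{k_i} t^i ⊆ K{{t}}` for a sequence `(k_i) ⊆ ℤ ∪ {∞}`. -/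
def mixedPT (q : ℕ) (k : ℤ → WithTop ℤ) : Set (Mt K) :=
  {f | ∀ i, f.1 i ∈ pT K q (k i)}

/-- `A = Σ_{i∈ℤ} 𝔭^{k_i} t^i ⊆ K{{t}}` for a sequence `(k_i) ⊆ ℤ ∪ {±∞}`. -/
def mixedPE (q : ℕ) (k : ℤ → WithBot (WithTop ℤ)) : Set (Mt K) :=
  {f | ∀ i, f.1 i ∈ pE K q (k i)}

/-- The admissible seminorm `‖Σ x_i t^i‖ = sup_i ‖x_i‖ q^{n_i}` on `K{{t}}`. -/
def mixedSeminorm (q : ℕ) (n : ℤ → WithBot ℤ) (f : Mt K) : ℝ :=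
  sSup {r : ℝ | ∃ i : ℤ, r = ‖f.1 i‖ * qpow q (n i)}

/-- The ring of integers `𝒪{{t}} ⊆ K{{t}}`. -/
def mixedIntegers : Set (Mt K) := {f | ∀ i, ‖f.1 i‖ ≤ 1}

/-- The rank-two ring of integers `Σ_{i<0} 𝔭 t^i + Σ_{i≥0} 𝒪 t^i ⊆ K{{t}}`. -/
def mixedRankTwo (q : ℕ) : Set (Mt K) :=
  {f | (∀ i : ℤ, i < 0 → ‖f.1 i‖ ≤ ((q : ℝ))⁻¹) ∧ ∀ i : ℤ, 0 ≤ i → ‖f.1 i‖ ≤ 1}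

/-- The monomial `t^i ∈ K{{t}}`. -/
def mixedT (i : ℤ) : Mt K :=
  ⟨fun j => if j = i then 1 else 0,
    ⟨⟨1, fun j => by by_cases h : j = i <;> simp [h]⟩, by
      refine (tendsto_const_nhds : Filter.Tendsto (fun _ : ℤ => (0 : K))
        Filter.atBot (nhds 0)).congr' ?_
      filter_upwards [Filter.eventually_le_atBot (i - 1)] with j hj
      have h : j ≠ i := by omega
      simp [h]⟩⟩

/-- Coefficients of the product of two elements of `K{{t}}` (Cauchy product). -/
def mixedMulCoeff (x y : Mt K) : ℤ → K := fun k => ∑' i : ℤ, x.1 i * y.1 (k - i)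

/-- Multiplication on `K{{t}}`. -/
def mixedMul (x y : Mt K) : Mt K :=
  if h : mixedMulCoeff K x y ∈ mixedCarrier K then ⟨_, h⟩ else 0

/-- The pairing `γ(x)(y) = π₀(xy) = Σ_i x_i y_{-i}` on `K{{t}}`. -/
def mixedPairing (x y : Mt K) : K := ∑' i : ℤ, x.1 i * y.1 (-i)


/-! ### Auxiliary infrastructure for Statement 2 -/

namespace Aux2

variable {K : Type} [NontriviallyNormedField K] {q : ℕ}

lemma supp_lb (f : LaurentSeries K) : ∃ j : ℤ, ∀ i : ℤ, i < j → f.coeff i = 0 := by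
  by_cases hf : f = 0
  · exact ⟨0, fun i _ => by simp [hf]⟩
  · refine ⟨f.isWF_support.min (HahnSeries.support_nonempty_iff.2 hf), fun i hi => ?_⟩
    by_contra h
    exact Set.IsWF.not_lt_min f.isWF_support (HahnSeries.support_nonempty_iff.2 hf) h hi

lemma hq1 (hK : IsCharZeroLocalField K q) : (1:ℝ) < (q:ℝ) := by exact_mod_cast hK.one_lt_q

lemma hq0 (hK : IsCharZeroLocalField K q) : (0:ℝ) < (q:ℝ) := lt_trans one_pos (hq1 hK)

lemma pB_bot : pB K q ⊥ = Set.univ := rfl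

lemma mem_pB_bot (x : K) : x ∈ pB K q ⊥ := Set.mem_univ x

lemma pB_coe (m : ℤ) : pB K q (m : WithBot ℤ) = {x : K | ‖x‖ ≤ (q:ℝ)^(-m)} := rfl

lemma mem_pB_coe {m : ℤ} {x : K} : x ∈ pB K q (m : WithBot ℤ) ↔ ‖x‖ ≤ (q:ℝ)^(-m) := Iff.rfl

lemma pB_zero_mem (hK : IsCharZeroLocalField K q) (n : WithBot ℤ) : (0:K) ∈ pB K q n := by
  induction n using WithBot.recBotCoe with
  | bot => exact mem_pB_bot 0
  | coe m =>
    rw [mem_pB_coe, norm_zero]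
    exact le_of_lt (zpow_pos (hq0 hK) _)

lemma pB_add (hK : IsCharZeroLocalField K q) {n : WithBot ℤ} {x y : K}
    (hx : x ∈ pB K q n) (hy : y ∈ pB K q n) : x + y ∈ pB K q n := by
  induction n using WithBot.recBotCoe with
  | bot => exact mem_pB_bot _
  | coe m =>
    rw [mem_pB_coe] at hx hy ⊢
    exact le_trans (hK.nonarch x y) (max_le hx hy)

lemma pB_smul (hK : IsCharZeroLocalField K q) {n : WithBot ℤ} {c x : K}
    (hc : ‖c‖ ≤ 1) (hx : x ∈ pB K q n) : c • x ∈ pB K q n := by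
  induction n using WithBot.recBotCoe with
  | bot => exact mem_pB_bot _
  | coe m =>
    rw [mem_pB_coe] at hx ⊢
    rw [smul_eq_mul, norm_mul]
    calc ‖c‖ * ‖x‖ ≤ 1 * (q:ℝ)^(-m) :=
          mul_le_mul hc hx (norm_nonneg x) zero_le_one
      _ = (q:ℝ)^(-m) := one_mul _

lemma pB_neg (hK : IsCharZeroLocalField K q) {n : WithBot ℤ} {x : K}
    (hx : x ∈ pB K q n) : -x ∈ pB K q n := by
  have : -x = (-1 : K) • x := by simp
  rw [this]
  exact pB_smul hK (by simp) hx

lemma pB_isOpen (hK : IsCharZeroLocalField K q) (n : WithBot ℤ) : IsOpen (pB K q n) := by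
  induction n using WithBot.recBotCoe with
  | bot => exact isOpen_univ
  | coe m =>
    have hset : pB K q (m : WithBot ℤ) = {x : K | ‖x‖ < (q:ℝ)^(-m+1)} := by
      ext x
      rw [mem_pB_coe]
      constructor
      · intro hx
        exact lt_of_le_of_lt hx (zpow_lt_zpow_right₀ (hq1 hK) (by omega))
      · intro hx
        by_cases hx0 : x = 0
        · rw [hx0, norm_zero]; exact le_of_lt (zpow_pos (hq0 hK) _)
        · obtain ⟨l, hl⟩ := hK.norm_values x hx0
          simp only [Set.mem_setOf_eq] at hx
          rw [hl] at hx ⊢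
          have hlt : -l < -m + 1 := (zpow_lt_zpow_iff_right₀ (hq1 hK)).1 hx
          exact zpow_le_zpow_right₀ (le_of_lt (hq1 hK)) (by omega)
    rw [hset]
    exact isOpen_lt continuous_norm continuous_const

lemma exists_pB_subset_nhds (hK : IsCharZeroLocalField K q) {S : Set K}
    (hS : S ∈ nhds (0:K)) : ∃ m : ℤ, pB K q (m : WithBot ℤ) ⊆ S := by
  rcases Metric.mem_nhds_iff.1 hS with ⟨ε, hε, hball⟩
  obtain ⟨nn, hn⟩ := exists_pow_lt_of_lt_one hε
    (show (q:ℝ)⁻¹ < 1 by rw [inv_lt_one_iff₀]; exact Or.inr (hq1 hK))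
  refine ⟨(nn : ℤ), fun x hx => hball ?_⟩
  rw [Metric.mem_ball, dist_zero_right]
  have hx' : ‖x‖ ≤ (q:ℝ)^(-(nn:ℤ)) := hx
  calc ‖x‖ ≤ (q:ℝ)^(-(nn:ℤ)) := hx'
    _ = ((q:ℝ)⁻¹)^nn := by rw [zpow_neg, zpow_natCast, inv_pow]
    _ < ε := hn

/-- The collection of "lattice-basic" sets `Σ 𝔭^{n_i} t^i` with `n_i = -∞` cofinally. -/
def latticeSets (K : Type) [NontriviallyNormedField K] (q : ℕ) : Set (Set (LaurentSeries K)) :=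
  {S | ∃ n : ℤ → WithBot ℤ, (∃ N : ℤ, ∀ i, N ≤ i → n i = ⊥) ∧ S = laurentLambda K q n}

lemma absorb (hK : IsCharZeroLocalField K q) {n : ℤ → WithBot ℤ} {N : ℤ}
    (hn : ∀ i, N ≤ i → n i = ⊥) (f : LaurentSeries K) :
    ∃ M : ℕ, ∀ c : K, ‖c‖ ≤ (q:ℝ)^(-(M:ℤ)) → c • f ∈ laurentLambda K q n := by
  obtain ⟨j, hj⟩ := supp_lb f
  have key : ∀ i : ℤ, ∃ Mi : ℕ, ∀ c : K,
      ‖c‖ ≤ (q:ℝ)^(-(Mi:ℤ)) → c * f.coeff i ∈ pB K q (n i) := by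
    intro i
    cases hni : n i with
    | bot => exact ⟨0, fun c _ => mem_pB_bot _⟩
    | coe m =>
      by_cases hfi : f.coeff i = 0
      · exact ⟨0, fun c _ => by rw [hfi, mul_zero]; exact pB_zero_mem hK _⟩
      · obtain ⟨l, hl⟩ := hK.norm_values _ hfi
        refine ⟨(m - l).toNat, fun c hc => ?_⟩
        rw [mem_pB_coe, norm_mul, hl]
        calc ‖c‖ * (q:ℝ)^(-l)
            ≤ (q:ℝ)^(-(((m-l).toNat:ℕ):ℤ)) * (q:ℝ)^(-l) :=
              mul_le_mul_of_nonneg_right hc (le_of_lt (zpow_pos (hq0 hK) _))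
          _ ≤ (q:ℝ)^(-(m-l)) * (q:ℝ)^(-l) :=
              mul_le_mul_of_nonneg_right
                (zpow_le_zpow_right₀ (le_of_lt (hq1 hK))
                  (by have := Int.self_le_toNat (m - l); omega))
                (le_of_lt (zpow_pos (hq0 hK) _))
          _ = (q:ℝ)^(-m) := by
              rw [← zpow_add₀ (ne_of_gt (hq0 hK))]
              congr 1
              ring
  choose Mi hMi using key
  refine ⟨(Finset.Icc j (N-1)).sup Mi, fun c hc => ?_⟩
  intro i
  rw [HahnSeries.coeff_smul, smul_eq_mul]
  by_cases hiN : N ≤ i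
  · rw [hn i hiN]; exact mem_pB_bot _
  · by_cases hij : i < j
    · rw [hj i hij, mul_zero]; exact pB_zero_mem hK _
    · have hmem : i ∈ Finset.Icc j (N-1) := Finset.mem_Icc.2 (by omega)
      have hle : Mi i ≤ (Finset.Icc j (N-1)).sup Mi := Finset.le_sup hmem
      apply hMi i
      calc ‖c‖ ≤ (q:ℝ)^(-(((Finset.Icc j (N-1)).sup Mi : ℕ):ℤ)) := hc
        _ ≤ (q:ℝ)^(-(Mi i : ℤ)) :=
            zpow_le_zpow_right₀ (le_of_lt (hq1 hK)) (by exact_mod_cast neg_le_neg (by exact_mod_cast hle))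

lemma laurentLambda_isLattice (hK : IsCharZeroLocalField K q) {n : ℤ → WithBot ℤ} {N : ℤ}
    (hn : ∀ i, N ≤ i → n i = ⊥) : IsLatticeSet K (laurentLambda K q n) := by
  refine ⟨⟨fun i => ?_, fun x hx y hy i => ?_, fun c hc x hx i => ?_⟩, ?_⟩
  · rw [HahnSeries.coeff_zero]; exact pB_zero_mem hK _
  · rw [HahnSeries.coeff_add]; exact pB_add hK (hx i) (hy i)
  · rw [HahnSeries.coeff_smul]; exact pB_smul hK hc (hx i)
  · intro v
    obtain ⟨M, hM⟩ := absorb hK hn v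
    obtain ⟨π, hπ⟩ := hK.exists_uniformizer
    have hπ0 : π ≠ 0 := by
      intro h
      rw [h, norm_zero] at hπ
      exact absurd hπ.symm (ne_of_gt (inv_pos.2 (hq0 hK)))
    refine ⟨π ^ M, pow_ne_zero _ hπ0, hM _ ?_⟩
    rw [norm_pow, hπ, zpow_neg, zpow_natCast, inv_pow]

lemma pB_anti (hK : IsCharZeroLocalField K q) {a b : WithBot ℤ} (hab : a ≤ b) :
    pB K q b ⊆ pB K q a := by
  induction a using WithBot.recBotCoe with
  | bot => intro x _; exact mem_pB_bot x
  | coe m =>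
    induction b using WithBot.recBotCoe with
    | bot => exact absurd hab (by simp)
    | coe m' =>
      intro x hx
      rw [mem_pB_coe] at hx ⊢
      refine le_trans hx (zpow_le_zpow_right₀ (le_of_lt (hq1 hK)) ?_)
      have : m ≤ m' := WithBot.coe_le_coe.1 hab
      omega

lemma pB_max (hK : IsCharZeroLocalField K q) (a b : WithBot ℤ) :
    pB K q (max a b) = pB K q a ∩ pB K q b := by
  apply Set.Subset.antisymm
  · exact Set.subset_inter (pB_anti hK (le_max_left a b)) (pB_anti hK (le_max_right a b))
  · intro x hx
    rcases max_choice a b with h | h <;> rw [h]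
    · exact hx.1
    · exact hx.2

/-- The additive group filter basis on `K((t))` given by lattice-basic sets. -/
def laurentAGB (hK : IsCharZeroLocalField K q) : AddGroupFilterBasis (LaurentSeries K) :=
  addGroupFilterBasisOfComm (latticeSets K q)
    ⟨_, ⟨fun _ => ⊥, ⟨0, fun _ _ => rfl⟩, rfl⟩⟩
    (by
      rintro x y ⟨n, ⟨N, hN⟩, rfl⟩ ⟨n', ⟨N', hN'⟩, rfl⟩
      refine ⟨laurentLambda K q (fun i => max (n i) (n' i)),
        ⟨fun i => max (n i) (n' i), ⟨max N N', fun i hi => ?_⟩, rfl⟩, ?_⟩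
      · show max (n i) (n' i) = ⊥
        rw [hN i (le_trans (le_max_left _ _) hi), hN' i (le_trans (le_max_right _ _) hi)]
        rfl
      · intro f hf
        have hmax : ∀ i, f.coeff i ∈ pB K q (max (n i) (n' i)) := fun i => hf i
        refine ⟨fun i => ?_, fun i => ?_⟩
        · have := hmax i; rw [pB_max hK] at this; exact this.1
        · have := hmax i; rw [pB_max hK] at this; exact this.2)
    (by
      rintro U ⟨n, ⟨N, hN⟩, rfl⟩
      intro i
      rw [HahnSeries.coeff_zero]
      exact pB_zero_mem hK _)
    (by
      intro U hU
      refine ⟨U, hU, ?_⟩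
      obtain ⟨n, ⟨N, hN⟩, rfl⟩ := hU
      rw [Set.add_subset_iff]
      intro x hx y hy i
      rw [HahnSeries.coeff_add]
      exact pB_add hK (hx i) (hy i))
    (by
      intro U hU
      refine ⟨U, hU, ?_⟩
      obtain ⟨n, ⟨N, hN⟩, rfl⟩ := hU
      intro x hx
      show -x ∈ laurentLambda K q n
      intro i
      rw [HahnSeries.coeff_neg]
      exact pB_neg hK (hx i))

/-- The module filter basis on `K((t))` given by lattice-basic sets. -/
def laurentMFB (hK : IsCharZeroLocalField K q) : ModuleFilterBasis K (LaurentSeries K) :=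
  { laurentAGB hK with
    smul' := by
      intro U hU
      refine ⟨{c : K | ‖c‖ ≤ 1}, ?_, U, hU, ?_⟩
      · exact Filter.mem_of_superset (Metric.ball_mem_nhds 0 one_pos)
          (fun c hc => le_of_lt (mem_ball_zero_iff.1 hc))
      · obtain ⟨n, ⟨N, hN⟩, rfl⟩ := hU
        rintro z ⟨c, hc, w, hw, rfl⟩
        intro i
        rw [HahnSeries.coeff_smul]
        exact pB_smul hK hc (hw i)
    smul_left' := by
      intro x₀ U hU
      obtain ⟨n, ⟨N, hN⟩, rfl⟩ := hU
      have hk : ∃ k : ℤ, ‖x₀‖ ≤ (q:ℝ)^k := by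
        by_cases h : x₀ = 0
        · exact ⟨0, by simp [h]⟩
        · obtain ⟨l, hl⟩ := hK.norm_values x₀ h
          exact ⟨-l, le_of_eq hl⟩
      obtain ⟨k, hk⟩ := hk
      refine ⟨laurentLambda K q (fun i => (n i).map (· + k)),
        ⟨fun i => (n i).map (· + k), ⟨N, fun i hi => by
          show WithBot.map (fun x => x + k) (n i) = ⊥
          rw [hN i hi]; rfl⟩, rfl⟩, ?_⟩
      intro x hx
      show x₀ • x ∈ laurentLambda K q n
      intro i
      rw [HahnSeries.coeff_smul]
      have hx' : x.coeff i ∈ pB K q ((n i).map (· + k)) := hx i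
      cases hni : n i with
      | bot => exact mem_pB_bot _
      | coe m =>
        rw [hni, WithBot.map_coe] at hx'
        have hx'' : ‖x.coeff i‖ ≤ (q:ℝ)^(-(m+k)) := hx'
        rw [mem_pB_coe, smul_eq_mul, norm_mul]
        calc ‖x₀‖ * ‖x.coeff i‖ ≤ (q:ℝ)^k * (q:ℝ)^(-(m+k)) :=
              mul_le_mul hk hx'' (norm_nonneg _) (le_of_lt (zpow_pos (hq0 hK) _))
          _ = (q:ℝ)^(-m) := by
              rw [← zpow_add₀ (ne_of_gt (hq0 hK))]
              congr 1
              ring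
    smul_right' := by
      intro f U hU
      obtain ⟨n, ⟨N, hN⟩, rfl⟩ := hU
      obtain ⟨M, hM⟩ := absorb hK hN f
      filter_upwards [Metric.ball_mem_nhds (0:K) (zpow_pos (hq0 hK) (-(M:ℤ)))] with c hc
      exact hM c (le_of_lt (mem_ball_zero_iff.1 hc)) }

lemma lattice_subset_basic (hK : IsCharZeroLocalField K q) :
    latticeSets K q ⊆ laurentBasic K := by
  rintro S ⟨n, ⟨N, hN⟩, rfl⟩
  exact ⟨fun i => pB K q (n i), fun i => ⟨pB_isOpen hK _, pB_zero_mem hK _⟩,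
    ⟨N, fun i hi => by show pB K q (n i) = Set.univ; rw [hN i hi]; rfl⟩, rfl⟩

lemma basic_refine (hK : IsCharZeroLocalField K q) {U : Set (LaurentSeries K)}
    (hU : U ∈ laurentBasic K) : ∃ W ∈ latticeSets K q, W ⊆ U := by
  obtain ⟨Us, hUs, ⟨N, hN⟩, rfl⟩ := hU
  have h : ∀ i, ∃ m : ℤ, pB K q (m : WithBot ℤ) ⊆ Us i := fun i =>
    exists_pB_subset_nhds hK ((hUs i).1.mem_nhds (hUs i).2)
  choose m hm using h
  refine ⟨laurentLambda K q (fun i => if N ≤ i then ⊥ else ((m i : ℤ) : WithBot ℤ)),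
    ⟨_, ⟨N, fun i hi => if_pos hi⟩, rfl⟩, ?_⟩
  intro f hf i
  by_cases hi : N ≤ i
  · rw [hN i hi]; exact Set.mem_univ _
  · have h2 : f.coeff i ∈ pB K q (if N ≤ i then ⊥ else ((m i : ℤ) : WithBot ℤ)) := hf i
    rw [if_neg hi] at h2
    exact hm i h2

lemma laurentBasic_univ : Set.univ ∈ laurentBasic K :=
  ⟨fun _ => Set.univ, fun _ => ⟨isOpen_univ, Set.mem_univ _⟩, ⟨0, fun _ _ => rfl⟩,
    by ext f; simp⟩

lemma laurentBasic_inter {U V : Set (LaurentSeries K)}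
    (hU : U ∈ laurentBasic K) (hV : V ∈ laurentBasic K) : U ∩ V ∈ laurentBasic K := by
  obtain ⟨Us, hUs, ⟨N, hN⟩, rfl⟩ := hU
  obtain ⟨Vs, hVs, ⟨N', hN'⟩, rfl⟩ := hV
  refine ⟨fun i => Us i ∩ Vs i,
    fun i => ⟨(hUs i).1.inter (hVs i).1, ⟨(hUs i).2, (hVs i).2⟩⟩,
    ⟨max N N', fun i hi => by
      show Us i ∩ Vs i = Set.univ
      rw [hN i (le_trans (le_max_left _ _) hi), hN' i (le_trans (le_max_right _ _) hi)]
      simp⟩, ?_⟩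
  ext f
  simp only [Set.mem_inter_iff, Set.mem_setOf_eq, forall_and]

lemma mem_laurentF {s : Set (LaurentSeries K)} :
    s ∈ (⨅ U ∈ laurentBasic K, Filter.principal U) ↔ ∃ U ∈ laurentBasic K, U ⊆ s := by
  have hdir : DirectedOn ((Filter.principal : Set (LaurentSeries K) → Filter (LaurentSeries K)) ⁻¹'o (· ≥ ·))
      (laurentBasic K) := by
    intro U hU V hV
    exact ⟨U ∩ V, laurentBasic_inter hU hV,
      Filter.principal_mono.2 Set.inter_subset_left,
      Filter.principal_mono.2 Set.inter_subset_right⟩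
  rw [Filter.mem_biInf_of_directed hdir ⟨Set.univ, laurentBasic_univ⟩]
  simp only [Filter.mem_principal]

lemma filter_eq (hK : IsCharZeroLocalField K q) :
    (laurentMFB hK).toAddGroupFilterBasis.toFilterBasis.filter
      = ⨅ U ∈ laurentBasic K, Filter.principal U := by
  ext s
  rw [FilterBasis.mem_filter_iff, mem_laurentF]
  constructor
  · rintro ⟨t, ht, hts⟩
    exact ⟨t, lattice_subset_basic hK ht, hts⟩
  · rintro ⟨U, hU, hUs⟩
    obtain ⟨W, hW, hWU⟩ := basic_refine hK hU
    exact ⟨W, hW, hWU.trans hUs⟩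

lemma top_eq (hK : IsCharZeroLocalField K q) :
    laurentTop K = (laurentMFB hK).toAddGroupFilterBasis.topology := by
  have h : (fun x : LaurentSeries K =>
      Filter.map (fun v => x + v) (⨅ U ∈ laurentBasic K, Filter.principal U))
      = (laurentMFB hK).toAddGroupFilterBasis.N := by
    funext x
    rw [← filter_eq hK]
    rfl
  unfold laurentTop addTopologyOf
  rw [h]
  rfl

lemma laurent_nhds (hK : IsCharZeroLocalField K q) (x : LaurentSeries K) :
    @nhds _ (laurentTop K) x
      = Filter.map (fun v => x + v) (laurentMFB hK).toAddGroupFilterBasis.toFilterBasis.filter := by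
  rw [top_eq hK]
  exact (laurentMFB hK).toAddGroupFilterBasis.nhds_eq

lemma mem_latticeSets (hK : IsCharZeroLocalField K q) {W : Set (LaurentSeries K)}
    (hW : W ∈ latticeSets K q) :
    W ∈ (laurentMFB hK).toAddGroupFilterBasis.toFilterBasis.filter :=
  (laurentMFB hK).toAddGroupFilterBasis.toFilterBasis.mem_filter_of_mem hW

lemma isOpen_laurentTop_iff {S : Set (LaurentSeries K)} :
    IsOpen[laurentTop K] S ↔ ∀ x ∈ S, S ∈ @nhds _ (laurentTop K) x := by
  letI := laurentTop K
  exact isOpen_iff_mem_nhds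

lemma lctvs (hK : IsCharZeroLocalField K q) : IsLCTVS K (laurentTop K) := by
  refine ⟨?_, ?_, ?_⟩
  · rw [top_eq hK]
    exact (laurentMFB hK).toAddGroupFilterBasis.isTopologicalAddGroup
  · rw [top_eq hK]
    exact (laurentMFB hK).continuousSMul
  · intro S hS
    rw [laurent_nhds hK, Filter.mem_map] at hS
    obtain ⟨t, ht, hts⟩ := (FilterBasis.mem_filter_iff _).1 hS
    have ht' : t ∈ latticeSets K q := ht
    obtain ⟨n, ⟨N, hN⟩, rfl⟩ := ht'
    refine ⟨laurentLambda K q n, laurentLambda_isLattice hK hN, ?_, ?_⟩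
    · rw [laurent_nhds hK, Filter.mem_map]
      apply Filter.mem_of_superset (mem_latticeSets hK ⟨n, ⟨N, hN⟩, rfl⟩)
      intro y hy
      simp only [Set.mem_preimage, zero_add]
      exact hy
    · intro f hf
      have := hts hf
      simpa using this

lemma sum_single_coeff (s : Finset ℤ) (g : ℤ → K) (i : ℤ) :
    (∑ k ∈ s, HahnSeries.single k (g k)).coeff i = if i ∈ s then g i else 0 := by
  classical
  have h : (HahnSeries.coeff.addMonoidHom i) (∑ k ∈ s, HahnSeries.single k (g k))
      = ∑ k ∈ s, (HahnSeries.coeff.addMonoidHom i) (HahnSeries.single k (g k)) :=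
    map_sum (HahnSeries.coeff.addMonoidHom i) _ s
  calc (∑ k ∈ s, HahnSeries.single k (g k)).coeff i
      = ∑ k ∈ s, (HahnSeries.single k (g k)).coeff i := h
    _ = ∑ k ∈ s, if i = k then g k else 0 := by
        refine Finset.sum_congr rfl fun k _ => ?_
        rw [HahnSeries.coeff_single]
        split_ifs <;> rfl
    _ = if i ∈ s then g i else 0 := Finset.sum_ite_eq s i g

lemma exists_lattice_subset (hK : IsCharZeroLocalField K q)
    (τ : TopologicalSpace (LaurentSeries K))
    (hincl : ∀ j : ℤ,
      @Continuous {g : LaurentSeries K // ∀ i : ℤ, i < j → g.coeff i = 0} (LaurentSeries K)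
        (TopologicalSpace.induced
          (fun g => fun i : ℤ => (g : LaurentSeries K).coeff i)
          (inferInstance : TopologicalSpace (ℤ → K)))
        τ Subtype.val)
    {Λ : Set (LaurentSeries K)} (hΛ : IsLatticeSet K Λ) (hΛn : Λ ∈ @nhds _ τ 0) :
    ∃ W ∈ latticeSets K q, W ⊆ Λ := by
  letI := τ
  obtain ⟨⟨h0, hadd, hsmul⟩, -⟩ := hΛ
  -- Step a: negative coefficients, via continuity of c ↦ c tⁱ
  have ha : ∀ i : ℤ, ∃ m : ℤ, ∀ c : K,
      c ∈ pB K q ((m : ℤ) : WithBot ℤ) → (HahnSeries.single i c : LaurentSeries K) ∈ Λ := by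
    intro i
    letI : TopologicalSpace {g : LaurentSeries K // ∀ k : ℤ, k < i → g.coeff k = 0} :=
      TopologicalSpace.induced
        (fun g => fun i' : ℤ => (g : LaurentSeries K).coeff i')
        (inferInstance : TopologicalSpace (ℤ → K))
    have hφ : Continuous (fun c : K => (⟨HahnSeries.single i c,
        fun k hk => HahnSeries.coeff_single_of_ne (ne_of_lt hk)⟩ :
        {g : LaurentSeries K // ∀ k : ℤ, k < i → g.coeff k = 0})) := by
      apply continuous_induced_rng.2
      refine continuous_pi fun k => ?_
      by_cases hk : k = i
      · subst hk
        show Continuous fun c : K => (HahnSeries.single k c).coeff k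
        simpa only [HahnSeries.coeff_single_same] using continuous_id'
      · show Continuous fun c : K => (HahnSeries.single i c).coeff k
        simp only [HahnSeries.coeff_single_of_ne hk]
        exact continuous_const
    have hcont := (hincl i).comp hφ
    have hmem : {c : K | (HahnSeries.single i c : LaurentSeries K) ∈ Λ} ∈ nhds (0:K) := by
      have h0' : Λ ∈ @nhds _ τ (HahnSeries.single i (0:K)) := by
        rw [HahnSeries.single_eq_zero]; exact hΛn
      exact hcont.continuousAt.preimage_mem_nhds h0'
    obtain ⟨m, hm⟩ := exists_pB_subset_nhds hK hmem
    exact ⟨m, fun c hc => hm hc⟩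
  choose m1 hm1 using ha
  -- Step b: the trace on K[[t]]
  letI : TopologicalSpace {g : LaurentSeries K // ∀ i : ℤ, i < (0:ℤ) → g.coeff i = 0} :=
    TopologicalSpace.induced
      (fun g => fun i : ℤ => (g : LaurentSeries K).coeff i)
      (inferInstance : TopologicalSpace (ℤ → K))
  set pt : {g : LaurentSeries K // ∀ i : ℤ, i < (0:ℤ) → g.coeff i = 0} :=
    ⟨0, fun i _ => HahnSeries.coeff_zero⟩ with hpt
  have hz : (Subtype.val : {g : LaurentSeries K // ∀ i : ℤ, i < (0:ℤ) → g.coeff i = 0}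
      → LaurentSeries K) ⁻¹' Λ ∈ nhds pt :=
    (hincl 0).continuousAt.preimage_mem_nhds hΛn
  rw [nhds_induced] at hz
  rw [show (fun i : ℤ => (pt : LaurentSeries K).coeff i) = (0 : ℤ → K) from
    funext fun i => HahnSeries.coeff_zero] at hz
  obtain ⟨T, hT, hTsub⟩ := Filter.mem_comap.1 hz
  rw [nhds_pi] at hT
  obtain ⟨I, hIfin, t, ht, hIt⟩ := Filter.mem_pi.1 hT
  choose m0 hm0 using fun i => exists_pB_subset_nhds hK (ht i)
  obtain ⟨b, hb⟩ := hIfin.toFinset.exists_le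
  refine ⟨laurentLambda K q (fun i => if i < 0 then ((m1 i : ℤ) : WithBot ℤ)
      else if i ∈ I then ((m0 i : ℤ) : WithBot ℤ) else ⊥),
    ⟨_, ⟨max (b+1) 1, fun i hi => ?_⟩, rfl⟩, ?_⟩
  · have h1 : ¬ i < 0 := by
      have := le_trans (le_max_right (b+1) 1) hi
      omega
    have h2 : i ∉ I := fun hiI => by
      have h3 := hb i (hIfin.mem_toFinset.2 hiI)
      have h4 := le_trans (le_max_left (b+1) 1) hi
      omega
    show (if i < 0 then ((m1 i : ℤ) : WithBot ℤ)
      else if i ∈ I then ((m0 i : ℤ) : WithBot ℤ) else ⊥) = ⊥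
    rw [if_neg h1, if_neg h2]
  · intro f hf
    have hf' : ∀ i : ℤ, f.coeff i ∈ pB K q (if i < 0 then ((m1 i : ℤ) : WithBot ℤ)
        else if i ∈ I then ((m0 i : ℤ) : WithBot ℤ) else ⊥) := fun i => hf i
    obtain ⟨j0, hj0⟩ := supp_lb f
    set j : ℤ := min j0 0 with hjdef
    have hjlb : ∀ i, i < j → f.coeff i = 0 := fun i hi =>
      hj0 i (lt_of_lt_of_le hi (min_le_left _ _))
    set g : LaurentSeries K := ∑ k ∈ Finset.Ico j 0, HahnSeries.single k (f.coeff k) with hgdef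
    have hgcoeff : ∀ i, g.coeff i = if i ∈ Finset.Ico j 0 then f.coeff i else 0 :=
      fun i => sum_single_coeff _ _ i
    have hgΛ : g ∈ Λ := by
      rw [hgdef]
      refine Finset.sum_induction _ (· ∈ Λ) (fun a b pa pb => hadd a pa b pb) h0 ?_
      intro k hk
      have hk0 : k < 0 := (Finset.mem_Ico.1 hk).2
      apply hm1 k
      have h5 := hf' k
      rwa [if_pos hk0] at h5
    have hhc : ∀ i, (f - g).coeff i = if i < 0 then 0 else f.coeff i := by
      intro i
      rw [HahnSeries.coeff_sub, hgcoeff]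
      by_cases hi0 : i < 0
      · rw [if_pos hi0]
        by_cases hij : j ≤ i
        · rw [if_pos (Finset.mem_Ico.2 ⟨hij, hi0⟩), sub_self]
        · rw [if_neg (fun h => hij (Finset.mem_Ico.1 h).1), hjlb i (not_le.1 hij), sub_zero]
      · rw [if_neg hi0, if_neg (fun h => hi0 (Finset.mem_Ico.1 h).2), sub_zero]
    have hzmem : ∀ i : ℤ, i < (0:ℤ) → (f - g).coeff i = 0 := fun i hi => by
      rw [hhc i, if_pos hi]
    have hfgΛ : f - g ∈ Λ := by
      have hmemT : (⟨f - g, hzmem⟩ :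
          {g : LaurentSeries K // ∀ i : ℤ, i < (0:ℤ) → g.coeff i = 0}) ∈
          (fun g : {g : LaurentSeries K // ∀ i : ℤ, i < (0:ℤ) → g.coeff i = 0} =>
            fun i : ℤ => (g : LaurentSeries K).coeff i) ⁻¹' T := by
        apply hIt
        rw [Set.mem_pi]
        intro i hiI
        show (f - g).coeff i ∈ t i
        rcases lt_or_ge i 0 with hi | hi
        · rw [hhc i, if_pos hi]
          exact mem_of_mem_nhds (ht i)
        · rw [hhc i, if_neg (not_lt.2 hi)]
          apply hm0 i
          have h6 := hf' i
          rwa [if_neg (not_lt.2 hi), if_pos hiI] at h6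
      exact hTsub hmemT
    have hsum : f = g + (f - g) := by abel
    rw [hsum]
    exact hadd g hgΛ (f - g) hfgΛ

end Aux2
/-- Under the identification `K((t)) = ⋃_{j∈ℤ} t^j K[[t]]`, where each
subspace `t^j K[[t]]` carries the product topology of `K^ℕ` (induced by its coefficients),
the higher topology on `K((t))` coincides with the strict inductive limit topology: the finest
locally convex vector topology making every inclusion `t^j K[[t]] ↪ K((t))` continuous. -/
theorem statement2 (q : ℕ) (hK : IsCharZeroLocalField K q) :
    (∀ f : LaurentSeries K, ∃ j : ℤ, ∀ i : ℤ, i < j → f.coeff i = 0) ∧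
    IsLCTVS K (laurentTop K) ∧
    (∀ j : ℤ,
      @Continuous {g : LaurentSeries K // ∀ i : ℤ, i < j → g.coeff i = 0} (LaurentSeries K)
        (TopologicalSpace.induced
          (fun g => fun i : ℤ => (g : LaurentSeries K).coeff i)
          (inferInstance : TopologicalSpace (ℤ → K)))
        (laurentTop K) Subtype.val) ∧
    (∀ τ : TopologicalSpace (LaurentSeries K), IsLCTVS K τ →
      (∀ j : ℤ,
        @Continuous {g : LaurentSeries K // ∀ i : ℤ, i < j → g.coeff i = 0} (LaurentSeries K)
          (TopologicalSpace.induced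
            (fun g => fun i : ℤ => (g : LaurentSeries K).coeff i)
            (inferInstance : TopologicalSpace (ℤ → K)))
          τ Subtype.val) →
      ∀ S : Set (LaurentSeries K), IsOpen[τ] S → IsOpen[laurentTop K] S) := by
  refine ⟨fun f => Aux2.supp_lb f, Aux2.lctvs hK, ?_, ?_⟩
  · -- continuity of the inclusions for the higher topology
    intro j
    have hiff := @continuous_iff_continuousAt
      {g : LaurentSeries K // ∀ i : ℤ, i < j → g.coeff i = 0} (LaurentSeries K)
      (TopologicalSpace.induced
        (fun g => fun i : ℤ => (g : LaurentSeries K).coeff i)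
        (inferInstance : TopologicalSpace (ℤ → K))) (laurentTop K) Subtype.val
    refine hiff.2 fun g => ?_
    show Filter.Tendsto Subtype.val
      (@nhds _ (TopologicalSpace.induced
        (fun g => fun i : ℤ => (g : LaurentSeries K).coeff i)
        (inferInstance : TopologicalSpace (ℤ → K))) g)
      (@nhds _ (laurentTop K) (Subtype.val g))
    rw [Aux2.laurent_nhds hK, Filter.tendsto_def]
    intro s hs
    rw [Filter.mem_map] at hs
    obtain ⟨W, hW, hWs⟩ := (FilterBasis.mem_filter_iff _).1 hs
    have hW' : W ∈ Aux2.latticeSets K q := hW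
    obtain ⟨n, ⟨N, hN⟩, rfl⟩ := hW'
    rw [nhds_induced, Filter.mem_comap]
    refine ⟨⋂ i ∈ Finset.Ico j N,
      {y : ℤ → K | y i - (g : LaurentSeries K).coeff i ∈ pB K q (n i)}, ?_, ?_⟩
    · rw [Filter.biInter_finset_mem]
      intro i _
      apply IsOpen.mem_nhds
      · exact ((continuous_apply i).sub continuous_const).isOpen_preimage _
          (Aux2.pB_isOpen hK _)
      · show (g : LaurentSeries K).coeff i - (g : LaurentSeries K).coeff i ∈ pB K q (n i)
        rw [sub_self]
        exact Aux2.pB_zero_mem hK _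
    · intro g2 hg2
      show (g2 : LaurentSeries K) ∈ s
      have hmemW : (g2 : LaurentSeries K) - (g : LaurentSeries K) ∈ laurentLambda K q n := by
        intro i
        rw [HahnSeries.coeff_sub]
        rcases lt_or_ge i j with hij | hij
        · rw [g2.2 i hij, g.2 i hij, sub_self]
          exact Aux2.pB_zero_mem hK _
        · rcases lt_or_ge i N with hiN | hiN
          · exact Set.mem_iInter₂.1 (Set.mem_preimage.1 hg2) i (Finset.mem_Ico.2 ⟨hij, hiN⟩)
          · rw [hN i hiN]
            exact Aux2.mem_pB_bot _
      have h8 : (g : LaurentSeries K) + ((g2 : LaurentSeries K) - (g : LaurentSeries K)) ∈ s :=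
        hWs hmemW
      have h9 : (g : LaurentSeries K) + ((g2 : LaurentSeries K) - (g : LaurentSeries K))
          = (g2 : LaurentSeries K) := by abel
      rwa [h9] at h8
  · -- the higher topology is the finest locally convex one
    intro τ hτ hincl S hS
    obtain ⟨hga, hsm, hlat⟩ := hτ
    refine (Aux2.isOpen_laurentTop_iff).2 fun x hx => ?_
    rw [Aux2.laurent_nhds hK, Filter.mem_map]
    have hxS : (fun v => x + v) ⁻¹' S ∈ @nhds _ τ 0 := by
      letI := τ
      haveI := hga
      have hc : Continuous fun v : LaurentSeries K => x + v :=
        continuous_const.add continuous_id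
      have hSx : S ∈ nhds (x + 0) := by
        rw [add_zero]
        exact hS.mem_nhds hx
      exact hc.continuousAt.preimage_mem_nhds hSx
    obtain ⟨Λ, hΛ, hΛn, hΛsub⟩ := hlat _ hxS
    obtain ⟨W, hW, hWΛ⟩ := Aux2.exists_lattice_subset hK τ hincl hΛ hΛn
    exact Filter.mem_of_superset (Aux2.mem_latticeSets hK hW) (hWΛ.trans hΛsub)


end TwoDimLF
end
end

section
/- For any sequence (n_i)_{i∈ℤ} ⊂ ℤ ∪ {-∞} that is bounded above and satisfies n_i → -∞ as i → ∞, the map ‖Σ_{i∈ℤ} x_i t^i‖ = sup_{i∈ℤ} |x_i| q^{n_i} is a well-defined seminorm on the K-vector space K{{t}} (the supremum exists), and the higher topology on K{{t}} is exactly the locally convex topology generated by the family of all such seminorms. -/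
/-!
Common setting: `K` is a characteristic-zero local field (a finite extension of `ℚ_p`)
with ring of integers `𝒪 = {c : K | ‖c‖ ≤ 1}`, maximal ideal `𝔭 = {c : K | ‖c‖ < 1}`,
residue field of cardinality `q` and the absolute value normalised by `‖π‖ = q⁻¹`.
We formalise the two-dimensional local fields `K((t))` (as `LaurentSeries K`) and
`K{{t}}` (as the submodule `mixedCarrier K` of `ℤ → K`), their higher topologies, and
the relevant functional-analytic notions (lattices, seminorms, boundedness,
c-compactness, compactoidness, completeness for nets, duality).
-/

open Filter Topology Set Pointwise
open scoped Classical

noncomputable section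

namespace TwoDimLF

variable (K : Type) [NontriviallyNormedField K]

/-! ### Auxiliary lemmas for Statement 5 -/

section Statement5Aux

lemma regularize' (c : ℤ) (i0 : ℤ → ℤ) :
    ∃ m : ℤ → ℤ, (∀ i, m i ≤ c) ∧ (∀ l : ℤ, ∃ i1 : ℤ, ∀ i, i1 ≤ i → m i ≤ l) ∧
      (∀ i, m i = c ∨ i0 (m i) ≤ i) := by
  set j : ℕ → ℤ := fun k => Nat.rec (i0 c) (fun k jk => max (jk + 1) (i0 (c - (k + 1 : ℕ)))) k
    with hjdef
  have hj0 : j 0 = i0 c := rfl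
  have hjsucc : ∀ k, j (k + 1) = max (j k + 1) (i0 (c - (k + 1 : ℕ))) := fun k => rfl
  have hjgrow : ∀ k : ℕ, j 0 + k ≤ j k := by
    intro k; induction k with
    | zero => simp
    | succ k ih =>
      have := hjsucc k
      have h1 : j k + 1 ≤ j (k+1) := by rw [this]; exact le_max_left _ _
      push_cast; push_cast at ih; omega
  have hjlb : ∀ k : ℕ, i0 (c - k) ≤ j k := by
    intro k; cases k with
    | zero => simp [hj0]
    | succ k => rw [hjsucc k]; exact le_max_right _ _
  refine ⟨fun i => if i < j 0 then c else
      c - (Nat.findGreatest (fun k => j k ≤ i) (i - j 0).toNat : ℤ),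
    fun i => ?_, fun l => ?_, fun i => ?_⟩
  · dsimp only; split <;> omega
  · rcases le_or_gt c l with h | h
    · exact ⟨0, fun i _ => by dsimp only; split <;> omega⟩
    · refine ⟨j (c - l).toNat, fun i hi => ?_⟩
      have hge : j 0 ≤ i := le_trans (by have := hjgrow (c - l).toNat; omega) hi
      have hnot : ¬ i < j 0 := not_lt.mpr hge
      have hk0 : (c - l).toNat ≤ (i - j 0).toNat := by
        have := hjgrow (c - l).toNat; omega
      have hle : (c - l).toNat ≤ Nat.findGreatest (fun k => j k ≤ i) (i - j 0).toNat :=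
        Nat.le_findGreatest hk0 hi
      dsimp only; rw [if_neg hnot]
      omega
  · dsimp only
    rcases lt_or_ge i (j 0) with h | h
    · rw [if_pos h]; exact Or.inl rfl
    · rw [if_neg (not_lt.mpr h)]
      right
      have hP0 : j 0 ≤ i := h
      have hspec : j (Nat.findGreatest (fun k => j k ≤ i) (i - j 0).toNat) ≤ i :=
        Nat.findGreatest_spec (P := fun k => j k ≤ i) (Nat.zero_le _) hP0
      exact le_trans (hjlb _) hspec

lemma qpow_bot (q : ℕ) : qpow q ⊥ = 0 := rfl

lemma qpow_coe (q : ℕ) (z : ℤ) : qpow q (z : WithBot ℤ) = (q : ℝ) ^ z := rfl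

lemma qpow_nonneg' (q : ℕ) (n : WithBot ℤ) : 0 ≤ qpow q n := by
  induction n using WithBot.recBotCoe with
  | bot => rw [qpow_bot]
  | coe z => rw [qpow_coe]; exact zpow_nonneg (by positivity) z

/-- The standard lattice `Σ 𝔭^{m_i} t^i` in `K{{t}}`. -/
def latSet (q : ℕ) (m : ℤ → ℤ) : Set (Mt K) :=
  {f | ∀ i, ‖f.1 i‖ ≤ (q : ℝ) ^ (-(m i))}

variable {K}

lemma one_lt_qR {q : ℕ} (hK : IsCharZeroLocalField K q) : (1 : ℝ) < q := by
  exact_mod_cast hK.one_lt_q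

lemma ball_isOpen {q : ℕ} (hK : IsCharZeroLocalField K q) (m : ℤ) :
    IsOpen {x : K | ‖x‖ ≤ (q : ℝ) ^ (-m)} := by
  have hq : (1 : ℝ) < q := one_lt_qR hK
  have heq : {x : K | ‖x‖ ≤ (q : ℝ) ^ (-m)} = Metric.ball (0 : K) ((q : ℝ) ^ (-(m - 1))) := by
    ext x
    simp only [Set.mem_setOf_eq, Metric.mem_ball, dist_zero_right]
    constructor
    · intro h; exact lt_of_le_of_lt h (zpow_lt_zpow_right₀ hq (by omega))
    · intro h
      rcases eq_or_ne x 0 with rfl | hx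
      · simpa using zpow_nonneg (by positivity : (0:ℝ) ≤ q) (-m)
      · obtain ⟨n, hn⟩ := hK.norm_values x hx
        rw [hn] at h ⊢
        have hlt : -n < -(m - 1) := (zpow_lt_zpow_iff_right₀ hq).mp h
        exact zpow_le_zpow_right₀ hq.le (by omega)
  rw [heq]; exact Metric.isOpen_ball

lemma latSet_mem_basic {q : ℕ} (hK : IsCharZeroLocalField K q) (m : ℤ → ℤ)
    (hc : ∃ c : ℤ, ∀ i, m i ≤ c) (ht : ∀ l : ℤ, ∃ i1 : ℤ, ∀ i, i1 ≤ i → m i ≤ l) :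
    latSet K q m ∈ mixedBasic K q := by
  have hq : (1 : ℝ) < q := one_lt_qR hK
  refine ⟨fun i => {x : K | ‖x‖ ≤ (q : ℝ) ^ (-(m i))},
    fun i => ⟨ball_isOpen hK _, by simpa using zpow_nonneg (by positivity : (0:ℝ) ≤ q) _⟩,
    ?_, ?_, rfl⟩
  · obtain ⟨c, hc⟩ := hc
    exact ⟨c, fun i x hx => le_trans hx (zpow_le_zpow_right₀ hq.le (by have := hc i; omega))⟩
  · intro l
    obtain ⟨i1, h⟩ := ht l
    exact ⟨i1, fun i hi x hx => le_trans hx (zpow_le_zpow_right₀ hq.le (by have := h i hi; omega))⟩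

lemma latSet_add {q : ℕ} (hK : IsCharZeroLocalField K q) {m : ℤ → ℤ} {f g : Mt K}
    (hf : f ∈ latSet K q m) (hg : g ∈ latSet K q m) : f + g ∈ latSet K q m := by
  intro i
  have hco : ((f + g) : Mt K).1 i = f.1 i + g.1 i := rfl
  rw [hco]
  exact le_trans (hK.nonarch _ _) (max_le (hf i) (hg i))

lemma univ_mem_mixedBasic {q : ℕ} : (Set.univ : Set (Mt K)) ∈ mixedBasic K q :=
  ⟨fun _ => Set.univ, fun _ => ⟨isOpen_univ, trivial⟩, ⟨0, fun _ => Set.subset_univ _⟩,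
    fun _ => ⟨0, fun _ _ => Set.subset_univ _⟩, by ext f; simp⟩

lemma inter_mem_mixedBasic {q : ℕ} (hK : IsCharZeroLocalField K q) {U V : Set (Mt K)}
    (hU : U ∈ mixedBasic K q) (hV : V ∈ mixedBasic K q) : U ∩ V ∈ mixedBasic K q := by
  have hq : (1 : ℝ) < q := one_lt_qR hK
  obtain ⟨Vs, h1, ⟨c1, hc1⟩, ht1, rfl⟩ := hU
  obtain ⟨Ws, h2, ⟨c2, hc2⟩, ht2, rfl⟩ := hV
  refine ⟨fun i => Vs i ∩ Ws i,
    fun i => ⟨(h1 i).1.inter (h2 i).1, (h1 i).2, (h2 i).2⟩,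
    ⟨max c1 c2, fun i x hx => ?_⟩, fun l => ?_, ?_⟩
  · refine ⟨hc1 i ?_, hc2 i ?_⟩ <;>
      exact le_trans hx (zpow_le_zpow_right₀ hq.le (by omega))
  · obtain ⟨a1, ha1⟩ := ht1 l
    obtain ⟨a2, ha2⟩ := ht2 l
    exact ⟨max a1 a2, fun i hi x hx =>
      ⟨ha1 i (le_trans (le_max_left _ _) hi) hx, ha2 i (le_trans (le_max_right _ _) hi) hx⟩⟩
  · ext f
    simp only [Set.mem_inter_iff, Set.mem_setOf_eq]
    exact ⟨fun h i => ⟨h.1 i, h.2 i⟩, fun h => ⟨fun i => (h i).1, fun i => (h i).2⟩⟩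

lemma basic_sub_lattice {q : ℕ} (hK : IsCharZeroLocalField K q) {U : Set (Mt K)}
    (hU : U ∈ mixedBasic K q) :
    ∃ m : ℤ → ℤ, (∃ c : ℤ, ∀ i, m i ≤ c) ∧ (∀ l : ℤ, ∃ i1 : ℤ, ∀ i, i1 ≤ i → m i ≤ l) ∧
      latSet K q m ⊆ U := by
  obtain ⟨Vs, hVs, ⟨c, hc⟩, htail, rfl⟩ := hU
  choose i0 hi0 using htail
  obtain ⟨m, hm1, hm2, hm3⟩ := regularize' c i0
  refine ⟨m, ⟨c, hm1⟩, hm2, fun f hf i => ?_⟩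
  rcases hm3 i with h | h
  · exact hc i (by rw [← h]; exact hf i)
  · exact hi0 (m i) i h (hf i)

lemma mem_mixedF {q : ℕ} (hK : IsCharZeroLocalField K q) (s : Set (Mt K)) :
    s ∈ (⨅ U ∈ mixedBasic K q, Filter.principal U) ↔ ∃ U ∈ mixedBasic K q, U ⊆ s := by
  rw [Filter.mem_biInf_of_directed ?_ ⟨Set.univ, univ_mem_mixedBasic⟩]
  · simp only [Filter.mem_principal]
  · intro U hU V hV
    exact ⟨U ∩ V, inter_mem_mixedBasic hK hU hV,
      Filter.principal_mono.mpr Set.inter_subset_left,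
      Filter.principal_mono.mpr Set.inter_subset_right⟩

lemma zero_mem_basic {q : ℕ} {U : Set (Mt K)} (hU : U ∈ mixedBasic K q) : (0 : Mt K) ∈ U := by
  obtain ⟨Vs, hVs, -, -, rfl⟩ := hU
  intro i
  have h : ((0 : Mt K)).1 i = 0 := rfl
  rw [h]; exact (hVs i).2

lemma nhds_mixedTop {q : ℕ} (hK : IsCharZeroLocalField K q) (x : Mt K) :
    @nhds _ (mixedTop K q) x
      = Filter.map (fun v => x + v) (⨅ U ∈ mixedBasic K q, Filter.principal U) := by
  refine TopologicalSpace.nhds_mkOfNhds _ x ?_ ?_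
  · intro a s hs
    rw [Filter.mem_map, mem_mixedF hK] at hs
    obtain ⟨U, hU, hUs⟩ := hs
    rw [Filter.mem_pure]
    have := hUs (zero_mem_basic hU)
    simpa using this
  · intro a s hs
    rw [Filter.mem_map, mem_mixedF hK] at hs
    obtain ⟨U, hU, hUs⟩ := hs
    obtain ⟨m, hmc, hmt, hmU⟩ := basic_sub_lattice hK hU
    have hWbasic := latSet_mem_basic hK m hmc hmt
    rw [Filter.eventually_iff, Filter.mem_map, mem_mixedF hK]
    refine ⟨latSet K q m, hWbasic, fun w hw => ?_⟩
    rw [Set.mem_preimage, Set.mem_setOf_eq, Filter.mem_map, mem_mixedF hK]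
    refine ⟨latSet K q m, hWbasic, fun v hv => ?_⟩
    rw [Set.mem_preimage]
    have h1 : w + v ∈ U := hmU (latSet_add hK hw hv)
    have h2 := hUs h1
    rw [Set.mem_preimage] at h2
    rwa [← add_assoc] at h2

lemma mem_nhds_zero {q : ℕ} (hK : IsCharZeroLocalField K q) (S : Set (Mt K)) :
    S ∈ @nhds _ (mixedTop K q) 0 ↔ ∃ U ∈ mixedBasic K q, U ⊆ S := by
  rw [nhds_mixedTop hK 0]
  have h : (fun v : Mt K => 0 + v) = id := by funext v; simp
  rw [h, Filter.map_id, mem_mixedF hK]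

lemma semi_set_nonempty_bdd {q : ℕ} (hK : IsCharZeroLocalField K q) {n : ℤ → WithBot ℤ}
    (hc : ∃ c : ℤ, ∀ i : ℤ, n i ≤ (c : WithBot ℤ)) (f : Mt K) :
    ({r : ℝ | ∃ i : ℤ, r = ‖f.1 i‖ * qpow q (n i)}).Nonempty ∧
      BddAbove {r : ℝ | ∃ i : ℤ, r = ‖f.1 i‖ * qpow q (n i)} := by
  have hq : (1 : ℝ) < q := one_lt_qR hK
  refine ⟨⟨_, 0, rfl⟩, ?_⟩
  obtain ⟨c, hc⟩ := hc
  obtain ⟨⟨C, hC⟩, -⟩ := f.2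
  refine ⟨max C 0 * (q : ℝ) ^ c, ?_⟩
  rintro r ⟨i, rfl⟩
  have hqpow_le : qpow q (n i) ≤ (q : ℝ) ^ c := by
    cases hni : n i with
    | bot => rw [qpow_bot]; exact zpow_nonneg (by positivity) c
    | coe z =>
      have hz : z ≤ c := by
        have := hc i; rw [hni] at this; exact_mod_cast this
      rw [qpow_coe]; exact zpow_le_zpow_right₀ hq.le hz
  exact mul_le_mul ((hC i).trans (le_max_left C 0)) hqpow_le (qpow_nonneg' q _)
    (le_max_right C 0)

lemma mixedSeminorm_nonneg {q : ℕ} (hK : IsCharZeroLocalField K q) {n : ℤ → WithBot ℤ}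
    (hc : ∃ c : ℤ, ∀ i : ℤ, n i ≤ (c : WithBot ℤ)) (f : Mt K) :
    0 ≤ mixedSeminorm K q n f := by
  have h0 : (0:ℝ) ≤ ‖f.1 0‖ * qpow q (n 0) := mul_nonneg (norm_nonneg _) (qpow_nonneg' q _)
  exact h0.trans (le_csSup (semi_set_nonempty_bdd hK hc f).2 ⟨0, rfl⟩)

lemma isSeminorm_mixed {q : ℕ} (hK : IsCharZeroLocalField K q) {n : ℤ → WithBot ℤ}
    (hc : ∃ c : ℤ, ∀ i : ℤ, n i ≤ (c : WithBot ℤ)) :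
    IsSeminorm K (mixedSeminorm K q n) := by
  have hbdd : ∀ f : Mt K, BddAbove {r : ℝ | ∃ i : ℤ, r = ‖f.1 i‖ * qpow q (n i)} :=
    fun f => (semi_set_nonempty_bdd hK hc f).2
  have hnn : ∀ f : Mt K, 0 ≤ mixedSeminorm K q n f := mixedSeminorm_nonneg hK hc
  constructor
  · intro c v
    rcases eq_or_ne c 0 with rfl | hc0
    · rw [zero_smul, norm_zero, zero_mul]
      have hset : {r : ℝ | ∃ i : ℤ, r = ‖((0 : Mt K)).1 i‖ * qpow q (n i)} = {0} := by
        ext r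
        constructor
        · rintro ⟨i, rfl⟩
          have h : ((0 : Mt K)).1 i = 0 := rfl
          simp [h]
        · rintro rfl; exact ⟨0, by simp [show ((0 : Mt K)).1 0 = 0 from rfl]⟩
      unfold mixedSeminorm
      rw [hset, csSup_singleton]
    · have hcpos : (0:ℝ) < ‖c‖ := norm_pos_iff.mpr hc0
      apply le_antisymm
      · apply Real.sSup_le
        · rintro r ⟨i, rfl⟩
          have hco : ((c • v) : Mt K).1 i = c * v.1 i := rfl
          rw [hco, norm_mul, mul_assoc]
          exact mul_le_mul_of_nonneg_left (le_csSup (hbdd v) ⟨i, rfl⟩) (norm_nonneg c)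
        · exact mul_nonneg (norm_nonneg c) (hnn v)
      · have h2 : mixedSeminorm K q n v ≤ ‖c‖⁻¹ * mixedSeminorm K q n (c • v) := by
          apply Real.sSup_le
          · rintro r ⟨i, rfl⟩
            have hco : ((c • v) : Mt K).1 i = c * v.1 i := rfl
            have heq : ‖v.1 i‖ * qpow q (n i) = ‖c‖⁻¹ * (‖((c • v) : Mt K).1 i‖ * qpow q (n i)) := by
              rw [hco, norm_mul]; field_simp
            rw [heq]
            exact mul_le_mul_of_nonneg_left (le_csSup (hbdd (c • v)) ⟨i, rfl⟩)
              (inv_nonneg.mpr (norm_nonneg c))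
          · exact mul_nonneg (inv_nonneg.mpr (norm_nonneg c)) (hnn _)
        calc ‖c‖ * mixedSeminorm K q n v
            ≤ ‖c‖ * (‖c‖⁻¹ * mixedSeminorm K q n (c • v)) :=
              mul_le_mul_of_nonneg_left h2 (norm_nonneg c)
          _ = mixedSeminorm K q n (c • v) := by field_simp
  · intro v w
    apply Real.sSup_le
    · rintro r ⟨i, rfl⟩
      have hco : ((v + w) : Mt K).1 i = v.1 i + w.1 i := rfl
      rw [hco]
      have h1 : ‖v.1 i + w.1 i‖ * qpow q (n i)
          ≤ max (‖v.1 i‖ * qpow q (n i)) (‖w.1 i‖ * qpow q (n i)) := by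
        rw [← max_mul_of_nonneg _ _ (qpow_nonneg' q (n i))]
        exact mul_le_mul_of_nonneg_right (hK.nonarch _ _) (qpow_nonneg' q (n i))
      exact h1.trans (max_le_max (le_csSup (hbdd v) ⟨i, rfl⟩) (le_csSup (hbdd w) ⟨i, rfl⟩))
    · exact le_max_of_le_left (hnn v)

end Statement5Aux

/-- For any sequence `(n_i) ⊆ ℤ ∪ {-∞}` bounded above with `n_i → -∞` as
`i → ∞`, the map `‖Σ x_i t^i‖ = sup_i ‖x_i‖ q^{n_i}` is a well-defined seminorm on `K{{t}}`
(the supremum exists), and the higher topology on `K{{t}}` is exactly the locally convex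
topology generated by the family of all such seminorms. -/
theorem statement5 (q : ℕ) (hK : IsCharZeroLocalField K q) :
    (∀ n : ℤ → WithBot ℤ,
      (∃ c : ℤ, ∀ i : ℤ, n i ≤ (c : WithBot ℤ)) →
      (∀ l : ℤ, ∃ i0 : ℤ, ∀ i : ℤ, i0 ≤ i → n i ≤ (l : WithBot ℤ)) →
      (∀ f : Mt K, (Set.Nonempty {r : ℝ | ∃ i : ℤ, r = ‖f.1 i‖ * qpow q (n i)} ∧
        BddAbove {r : ℝ | ∃ i : ℤ, r = ‖f.1 i‖ * qpow q (n i)})) ∧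
      IsSeminorm K (mixedSeminorm K q n)) ∧
    (∀ S : Set (Mt K),
      S ∈ @nhds _ (mixedTop K q) 0 ↔
        ∃ (m : ℕ) (ns : Fin m → ℤ → WithBot ℤ) (ε : ℝ), 0 < ε ∧
          (∀ j, (∃ c : ℤ, ∀ i : ℤ, ns j i ≤ (c : WithBot ℤ)) ∧
            (∀ l : ℤ, ∃ i0 : ℤ, ∀ i : ℤ, i0 ≤ i → ns j i ≤ (l : WithBot ℤ))) ∧
          {f : Mt K | ∀ j, mixedSeminorm K q (ns j) f ≤ ε} ⊆ S) := by
  have hq : (1:ℝ) < q := one_lt_qR hK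
  have hq0 : (0:ℝ) < q := lt_trans one_pos hq
  constructor
  · intro n hcb htail
    exact ⟨fun f => semi_set_nonempty_bdd hK hcb f, isSeminorm_mixed hK hcb⟩
  · intro S
    constructor
    · intro hS
      rw [mem_nhds_zero hK] at hS
      obtain ⟨U, hU, hUS⟩ := hS
      obtain ⟨m, ⟨c, hcm⟩, hmt, hmU⟩ := basic_sub_lattice hK hU
      refine ⟨1, fun _ i => ((m i : ℤ) : WithBot ℤ), 1, one_pos, ?_, ?_⟩
      · intro j
        refine ⟨⟨c, fun i => WithBot.coe_le_coe.mpr (hcm i)⟩, fun l => ?_⟩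
        obtain ⟨i1, h⟩ := hmt l
        exact ⟨i1, fun i hi => WithBot.coe_le_coe.mpr (h i hi)⟩
      · intro f hf
        apply hUS; apply hmU
        intro i
        have hb := (semi_set_nonempty_bdd hK (n := fun i => ((m i : ℤ) : WithBot ℤ))
          ⟨c, fun i => WithBot.coe_le_coe.mpr (hcm i)⟩ f).2
        have h1 : ‖f.1 i‖ * qpow q ((m i : ℤ) : WithBot ℤ) ≤ 1 :=
          (le_csSup hb ⟨i, rfl⟩).trans (hf 0)
        rw [qpow_coe] at h1
        have hpos : (0:ℝ) < (q:ℝ) ^ (m i) := zpow_pos hq0 _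
        have h2 : ‖f.1 i‖ ≤ 1 / (q:ℝ) ^ (m i) := (le_div_iff₀ hpos).mpr h1
        rwa [one_div, ← zpow_neg] at h2
    · intro hS
      rw [mem_nhds_zero hK]
      obtain ⟨mm, ns, ε, hε, hadm, hsub⟩ := hS
      rcases Nat.eq_zero_or_pos mm with rfl | hmm
      · exact ⟨Set.univ, univ_mem_mixedBasic, fun f _ => hsub (fun j => j.elim0)⟩
      · have hne : (Finset.univ : Finset (Fin mm)).Nonempty :=
          ⟨⟨0, hmm⟩, Finset.mem_univ _⟩
        choose cb hcb using fun j => (hadm j).1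
        choose i0f hi0f using fun j => (hadm j).2
        set cstar : ℤ := Finset.univ.sup' hne cb with hcstar
        have hNt : ∀ l : ℤ, ∃ i1 : ℤ, ∀ i, i1 ≤ i →
            (Finset.univ.sup fun j => ns j i) ≤ (l : WithBot ℤ) := by
          intro l
          refine ⟨Finset.univ.sup' hne (fun j => i0f j l), fun i hi =>
            Finset.sup_le fun j _ => ?_⟩
          exact hi0f j l i ((Finset.le_sup' _ (Finset.mem_univ j)).trans hi)
        choose tN htN using hNt
        obtain ⟨m', hm1, hm2, hm3⟩ := regularize' cstar tN
        have hNm : ∀ i, (Finset.univ.sup fun j => ns j i) ≤ ((m' i : ℤ) : WithBot ℤ) := by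
          intro i
          rcases hm3 i with h | h
          · rw [h]
            exact Finset.sup_le fun j _ => (hcb j i).trans
              (WithBot.coe_le_coe.mpr (Finset.le_sup' cb (Finset.mem_univ j)))
          · exact htN (m' i) i h
        obtain ⟨eN, heN⟩ := exists_pow_lt_of_lt_one hε (inv_lt_one_of_one_lt₀ hq)
        refine ⟨latSet K q (fun i => m' i + eN), latSet_mem_basic hK _
          ⟨cstar + eN, fun i => by have := hm1 i; omega⟩ (fun l => ?_), fun f hf => hsub ?_⟩
        · obtain ⟨i1, h⟩ := hm2 (l - eN)
          exact ⟨i1, fun i hi => by have := h i hi; omega⟩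
        · intro j
          apply Real.sSup_le _ hε.le
          rintro r ⟨i, rfl⟩
          cases hni : ns j i with
          | bot => rw [qpow_bot, mul_zero]; exact hε.le
          | coe z =>
            have hzN : ((z : ℤ) : WithBot ℤ) ≤ ((m' i : ℤ) : WithBot ℤ) := by
              rw [← hni]
              exact (Finset.le_sup (f := fun j => ns j i) (Finset.mem_univ j)).trans (hNm i)
            have hz : z ≤ m' i := WithBot.coe_le_coe.mp hzN
            rw [qpow_coe]
            calc ‖f.1 i‖ * (q:ℝ) ^ z
                ≤ (q:ℝ) ^ (-(m' i + eN : ℤ)) * (q:ℝ) ^ z :=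
                  mul_le_mul_of_nonneg_right (hf i) (zpow_nonneg hq0.le z)
              _ = (q:ℝ) ^ (-(m' i + eN : ℤ) + z) := (zpow_add₀ hq0.ne' _ _).symm
              _ ≤ (q:ℝ) ^ (-(eN:ℤ)) := zpow_le_zpow_right₀ hq.le (by omega)
              _ = ((q:ℝ)⁻¹) ^ eN := by rw [zpow_neg, ← inv_zpow, zpow_natCast]
              _ ≤ ε := heN.le

end TwoDimLF
end
end

section
/- Let F = K((t)) or F = K{{t}} with the higher topology. The multiplication map μ: F × F → F is bounded with respect to the product bornology: if B₁ and B₂ are bounded subsets of F, then μ(B₁ × B₂) = {xy : x ∈ B₁, y ∈ B₂} is a bounded subset of F. -/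
/-!
Common setting: `K` is a characteristic-zero local field (a finite extension of `ℚ_p`)
with ring of integers `𝒪 = {c : K | ‖c‖ ≤ 1}`, maximal ideal `𝔭 = {c : K | ‖c‖ < 1}`,
residue field of cardinality `q` and the absolute value normalised by `‖π‖ = q⁻¹`.
We formalise the two-dimensional local fields `K((t))` (as `LaurentSeries K`) and
`K{{t}}` (as the submodule `mixedCarrier K` of `ℤ → K`), their higher topologies, and
the relevant functional-analytic notions (lattices, seminorms, boundedness,
c-compactness, compactoidness, completeness for nets, duality).
-/

open Filter Topology Set Pointwise
open scoped Classical

noncomputable section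

namespace TwoDimLF

variable (K : Type) [NontriviallyNormedField K]

/-! ### Auxiliary material for Statement 11 -/

section Aux

variable {W : Type} [AddCommGroup W]

lemma isOpen_addTopologyOf_iff (Bc : Set (Set W)) (S : Set W) :
    IsOpen[addTopologyOf Bc] S ↔
      ∀ x ∈ S, S ∈ Filter.map (fun v => x + v) (⨅ U ∈ Bc, Filter.principal U) := Iff.rfl

lemma isOpen_of_mem_basic {Bc : Set (Set W)} {S : Set W} (hS : S ∈ Bc)
    (hadd : ∀ x ∈ S, ∀ y ∈ S, x + y ∈ S) : IsOpen[addTopologyOf Bc] S := by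
  rw [isOpen_addTopologyOf_iff]
  intro x hx
  rw [Filter.mem_map]
  refine Filter.mem_of_superset ?_ (fun y hy => hadd x hx y hy)
  exact (iInf₂_le S hS : _ ≤ Filter.principal S) (Filter.mem_principal_self S)

lemma exists_basic_subset {Bc : Set (Set W)} (hne : Bc.Nonempty)
    (hdir : ∀ S ∈ Bc, ∀ T ∈ Bc, ∃ R ∈ Bc, R ⊆ S ∩ T) {Λ : Set W}
    (hΛ : IsOpen[addTopologyOf Bc] Λ) (h0 : (0:W) ∈ Λ) : ∃ S ∈ Bc, S ⊆ Λ := by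
  rw [isOpen_addTopologyOf_iff] at hΛ
  have h := hΛ 0 h0
  rw [Filter.mem_map] at h
  have h' : Λ ∈ ⨅ U ∈ Bc, Filter.principal U := by
    have he : (fun v : W => 0 + v) ⁻¹' Λ = Λ := by ext y; simp
    rwa [he] at h
  rw [iInf_subtype'] at h'
  haveI : Nonempty Bc := hne.to_subtype
  have hd : Directed (· ≥ ·) (fun U : Bc => Filter.principal (U : Set W)) := by
    rintro ⟨S, hS⟩ ⟨T, hT⟩
    obtain ⟨R, hR, hsub⟩ := hdir S hS T hT
    exact ⟨⟨R, hR⟩, Filter.principal_mono.2 (fun x hx => (hsub hx).1),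
      Filter.principal_mono.2 (fun x hx => (hsub hx).2)⟩
  rw [Filter.mem_iInf_of_directed hd] at h'
  obtain ⟨⟨S, hS⟩, hmem⟩ := h'
  exact ⟨S, hS, Filter.mem_principal.1 hmem⟩

end Aux

section NonarchAux

variable {K}

lemma aux_ball_isOpen (hna : ∀ x y : K, ‖x + y‖ ≤ max ‖x‖ ‖y‖) {r : ℝ} (hr : 0 < r) :
    IsOpen {x : K | ‖x‖ ≤ r} := by
  rw [Metric.isOpen_iff]
  intro x hx
  refine ⟨r, hr, fun y hy => ?_⟩
  have h1 : ‖x + (y - x)‖ ≤ max ‖x‖ ‖y - x‖ := hna _ _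
  simp only [add_sub_cancel] at h1
  refine h1.trans (max_le hx ?_)
  rw [Metric.mem_ball, dist_eq_norm] at hy
  exact hy.le

lemma aux_ball_mono {r s : ℝ} (h : r ≤ s) :
    {x : K | ‖x‖ ≤ r} ⊆ {x : K | ‖x‖ ≤ s} := fun _ hx => le_trans hx h

lemma aux_norm_sum_le (hna : ∀ x y : K, ‖x + y‖ ≤ max ‖x‖ ‖y‖) {ι : Type}
    (s : Finset ι) (f : ι → K) {C : ℝ} (hC : 0 ≤ C)
    (h : ∀ i ∈ s, ‖f i‖ ≤ C) : ‖∑ i ∈ s, f i‖ ≤ C := by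
  classical
  induction s using Finset.induction_on with
  | empty => simpa using hC
  | @insert a s ha ih =>
    rw [Finset.sum_insert ha]
    exact (hna _ _).trans (max_le (h _ (Finset.mem_insert_self _ _))
      (ih fun i hi => h i (Finset.mem_insert_of_mem hi)))

lemma aux_norm_tsum_le (hna : ∀ x y : K, ‖x + y‖ ≤ max ‖x‖ ‖y‖) {ι : Type}
    (f : ι → K) {C : ℝ} (hC : 0 ≤ C) (h : ∀ i, ‖f i‖ ≤ C) : ‖∑' i, f i‖ ≤ C := by
  by_cases hs : Summable f
  · obtain ⟨a, ha⟩ := hs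
    rw [ha.tsum_eq]
    have ht : Filter.Tendsto (fun s : Finset ι => ‖∑ i ∈ s, f i‖) Filter.atTop (nhds ‖a‖) :=
      (continuous_norm.tendsto a).comp ha
    exact le_of_tendsto ht (Filter.Eventually.of_forall fun s =>
      aux_norm_sum_le hna s f hC fun i _ => h i)
  · rw [tsum_eq_zero_of_not_summable hs, norm_zero]; exact hC

lemma aux_exists_norm_ge {q : ℕ} (hK : IsCharZeroLocalField K q) (R : ℝ) :
    ∃ a : K, a ≠ 0 ∧ R ≤ ‖a‖ := by
  obtain ⟨π, hπ⟩ := hK.exists_uniformizer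
  have hq : (1:ℝ) < q := by exact_mod_cast hK.one_lt_q
  have hπ0 : π ≠ 0 := by
    intro h
    rw [h, norm_zero] at hπ
    have : (0:ℝ) < (q:ℝ)⁻¹ := by positivity
    rw [← hπ] at this; exact lt_irrefl 0 this
  obtain ⟨n, hn⟩ := pow_unbounded_of_one_lt R hq
  refine ⟨(π⁻¹) ^ n, pow_ne_zero _ (inv_ne_zero hπ0), ?_⟩
  rw [norm_pow, norm_inv, hπ, inv_inv]
  exact hn.le

lemma aux_exists_norm_le {q : ℕ} (hK : IsCharZeroLocalField K q) {ε : ℝ} (hε : 0 < ε) :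
    ∃ a : K, a ≠ 0 ∧ ‖a‖ ≤ ε := by
  obtain ⟨π, hπ⟩ := hK.exists_uniformizer
  have hq : (1:ℝ) < q := by exact_mod_cast hK.one_lt_q
  have hq0 : (0:ℝ) < q := lt_trans one_pos hq
  have hπ0 : π ≠ 0 := by
    intro h
    rw [h, norm_zero] at hπ
    have : (0:ℝ) < (q:ℝ)⁻¹ := by positivity
    rw [← hπ] at this; exact lt_irrefl 0 this
  obtain ⟨n, hn⟩ := pow_unbounded_of_one_lt ε⁻¹ hq
  refine ⟨π ^ n, pow_ne_zero _ hπ0, ?_⟩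
  rw [norm_pow, hπ, inv_pow]
  have h1 : ((q:ℝ)^n)⁻¹ ≤ (ε⁻¹)⁻¹ := by
    apply inv_anti₀ (by positivity) hn.le
  rwa [inv_inv] at h1

end NonarchAux

/-! #### Basic sets of the higher topologies -/

lemma laurentBasic_univ : (Set.univ : Set (LaurentSeries K)) ∈ laurentBasic K := by
  refine ⟨fun _ => Set.univ, fun i => ⟨isOpen_univ, trivial⟩, ⟨0, fun _ _ => rfl⟩, ?_⟩
  ext f; simp

lemma laurentBasic_inter {S T : Set (LaurentSeries K)} (hS : S ∈ laurentBasic K)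
    (hT : T ∈ laurentBasic K) : S ∩ T ∈ laurentBasic K := by
  obtain ⟨U, hU, ⟨N, hN⟩, rfl⟩ := hS
  obtain ⟨V, hV, ⟨M, hM⟩, rfl⟩ := hT
  refine ⟨fun i => U i ∩ V i, fun i => ⟨(hU i).1.inter (hV i).1, (hU i).2, (hV i).2⟩,
    ⟨max N M, fun i hi => by
      show U i ∩ V i = Set.univ
      rw [hN i (le_trans (le_max_left _ _) hi), hM i (le_trans (le_max_right _ _) hi)]
      simp⟩, ?_⟩
  ext f
  simp only [Set.mem_inter_iff, Set.mem_setOf_eq, ← forall_and]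

lemma mixedBasic_univ (q : ℕ) : (Set.univ : Set (Mt K)) ∈ mixedBasic K q := by
  refine ⟨fun _ => Set.univ, fun i => ⟨isOpen_univ, trivial⟩,
    ⟨0, fun _ => Set.subset_univ _⟩, fun l => ⟨0, fun _ _ => Set.subset_univ _⟩, ?_⟩
  ext f; simp

lemma mixedBasic_inter {q : ℕ} (hq : 1 ≤ (q:ℝ)) {S T : Set (Mt K)} (hS : S ∈ mixedBasic K q)
    (hT : T ∈ mixedBasic K q) : S ∩ T ∈ mixedBasic K q := by
  obtain ⟨U, hU, ⟨c, hc⟩, hg, rfl⟩ := hS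
  obtain ⟨V, hV, ⟨d, hd⟩, hg', rfl⟩ := hT
  refine ⟨fun i => U i ∩ V i, fun i => ⟨(hU i).1.inter (hV i).1, (hU i).2, (hV i).2⟩,
    ⟨max c d, fun i => Set.subset_inter
      (le_trans (aux_ball_mono (zpow_le_zpow_right₀ hq (neg_le_neg (le_max_left c d)))) (hc i))
      (le_trans (aux_ball_mono (zpow_le_zpow_right₀ hq (neg_le_neg (le_max_right c d)))) (hd i))⟩,
    ?_, ?_⟩
  · intro l
    obtain ⟨i0, hi0⟩ := hg l
    obtain ⟨i1, hi1⟩ := hg' l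
    exact ⟨max i0 i1, fun i hi => Set.subset_inter
      (hi0 i (le_trans (le_max_left _ _) hi)) (hi1 i (le_trans (le_max_right _ _) hi))⟩
  · ext f
    simp only [Set.mem_inter_iff, Set.mem_setOf_eq, ← forall_and]

/-! #### Weighted-ball lattices in `K((t))` -/

/-- The weighted-ball set `{f ∈ K((t)) | ‖f_i‖ ≤ w i for i < N₀}`. -/
def wlL (w : ℤ → ℝ) (N₀ : ℤ) : Set (LaurentSeries K) :=
  {f | ∀ i, i < N₀ → ‖f.coeff i‖ ≤ w i}

lemma mem_wlL {w : ℤ → ℝ} {N₀ : ℤ} {f : LaurentSeries K} :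
    f ∈ wlL K w N₀ ↔ ∀ i, i < N₀ → ‖f.coeff i‖ ≤ w i := Iff.rfl

lemma wlL_mem_basic (hna : ∀ x y : K, ‖x + y‖ ≤ max ‖x‖ ‖y‖) {w : ℤ → ℝ}
    (hw : ∀ i, 0 < w i) (N₀ : ℤ) : wlL K w N₀ ∈ laurentBasic K := by
  refine ⟨fun i => if i < N₀ then {x : K | ‖x‖ ≤ w i} else Set.univ, fun i => ?_,
    ⟨N₀, fun i hi => if_neg (not_lt.2 hi)⟩, ?_⟩
  · dsimp only
    split_ifs with h
    · exact ⟨aux_ball_isOpen hna (hw i), by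
        simp only [Set.mem_setOf_eq, norm_zero]; exact (hw i).le⟩
    · exact ⟨isOpen_univ, trivial⟩
  · ext f
    simp only [wlL, Set.mem_setOf_eq]
    constructor
    · intro h i
      split_ifs with hi
      · exact h i hi
      · trivial
    · intro h i hi
      have := h i
      rwa [if_pos hi] at this

lemma wlL_add_closed (hna : ∀ x y : K, ‖x + y‖ ≤ max ‖x‖ ‖y‖) {w : ℤ → ℝ} {N₀ : ℤ}
    {x y : LaurentSeries K} (hx : x ∈ wlL K w N₀) (hy : y ∈ wlL K w N₀) :
    x + y ∈ wlL K w N₀ := by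
  rw [mem_wlL] at *
  intro i hi
  rw [HahnSeries.coeff_add]
  exact (hna _ _).trans (max_le (hx i hi) (hy i hi))

lemma wlL_open (hna : ∀ x y : K, ‖x + y‖ ≤ max ‖x‖ ‖y‖) {w : ℤ → ℝ}
    (hw : ∀ i, 0 < w i) (N₀ : ℤ) : IsOpen[laurentTop K] (wlL K w N₀) :=
  isOpen_of_mem_basic (wlL_mem_basic K hna hw N₀)
    (fun _ hx _ hy => wlL_add_closed K hna hx hy)

lemma wlL_lattice {q : ℕ} (hK : IsCharZeroLocalField K q) {w : ℤ → ℝ}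
    (hw : ∀ i, 0 < w i) (N₀ : ℤ) : IsLatticeSet K (wlL K w N₀) := by
  constructor
  · refine ⟨?_, fun x hx y hy => wlL_add_closed K hK.nonarch hx hy, ?_⟩
    · rw [mem_wlL]
      intro i _
      rw [HahnSeries.coeff_zero, norm_zero]
      exact (hw i).le
    · intro c hc x hx
      rw [mem_wlL] at *
      intro i hi
      rw [HahnSeries.coeff_smul, smul_eq_mul, norm_mul]
      calc ‖c‖ * ‖x.coeff i‖ ≤ 1 * w i :=
            mul_le_mul hc (hx i hi) (norm_nonneg _) one_pos.le
        _ = w i := one_mul _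
  · intro v
    have hzero : ∀ i, i < v.order → v.coeff i = 0 :=
      fun i hi => HahnSeries.coeff_eq_zero_of_lt_order hi
    have key : ∃ ε : ℝ, 0 < ε ∧ ∀ i, v.order ≤ i → i < N₀ → ε * ‖v.coeff i‖ ≤ w i := by
      by_cases hT : (Finset.Icc v.order (N₀ - 1)).Nonempty
      · set ρ := (Finset.Icc v.order (N₀-1)).inf' hT w with hρdef
        set Cv := (Finset.Icc v.order (N₀-1)).sup' hT (fun i => ‖v.coeff i‖) with hCvdef
        have hρ : 0 < ρ := (Finset.lt_inf'_iff hT).2 fun i _ => hw i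
        obtain ⟨i₀, hi₀⟩ := hT
        have hCv : 0 ≤ Cv := le_trans (norm_nonneg (v.coeff i₀)) (Finset.le_sup' (fun i => ‖v.coeff i‖) hi₀)
        refine ⟨ρ / (Cv + 1), by positivity, fun i h1 h2 => ?_⟩
        have hi : i ∈ Finset.Icc v.order (N₀-1) := Finset.mem_Icc.2 ⟨h1, by omega⟩
        have h3 : ‖v.coeff i‖ ≤ Cv + 1 := le_trans (Finset.le_sup' (fun i => ‖v.coeff i‖) hi) (by linarith)
        calc ρ/(Cv+1) * ‖v.coeff i‖ ≤ ρ/(Cv+1) * (Cv+1) :=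
              mul_le_mul_of_nonneg_left h3 (by positivity)
          _ = ρ := div_mul_cancel₀ _ (by positivity)
          _ ≤ w i := Finset.inf'_le _ hi
      · exact ⟨1, one_pos, fun i h1 h2 =>
          absurd ⟨i, Finset.mem_Icc.2 ⟨h1, by omega⟩⟩ hT⟩
    obtain ⟨ε, hε, hkey⟩ := key
    obtain ⟨a, ha0, ha⟩ := aux_exists_norm_le hK hε
    refine ⟨a, ha0, ?_⟩
    rw [mem_wlL]
    intro i hi
    rw [HahnSeries.coeff_smul, smul_eq_mul, norm_mul]
    rcases lt_or_ge i v.order with h | h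
    · rw [hzero i h, norm_zero, mul_zero]
      exact (hw i).le
    · exact le_trans (mul_le_mul_of_nonneg_right ha (norm_nonneg _)) (hkey i h hi)

/-! #### Bounded sets in `K((t))` -/

lemma laurent_bdd_coeff {q : ℕ} (hK : IsCharZeroLocalField K q) {B : Set (LaurentSeries K)}
    (hB : IsVNBounded K (laurentTop K) B) (N₀ : ℤ) :
    ∃ C, 0 ≤ C ∧ ∀ f ∈ B, ∀ i, i < N₀ → ‖f.coeff i‖ ≤ C := by
  obtain ⟨a, haB⟩ := hB (wlL K (fun _ => 1) N₀)
    (wlL_lattice K hK (fun _ => one_pos) N₀) (wlL_open K hK.nonarch (fun _ => one_pos) N₀)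
  refine ⟨‖a‖, norm_nonneg a, fun f hf i hi => ?_⟩
  obtain ⟨g, hg, rfl⟩ := Set.mem_smul_set.1 (haB hf)
  rw [HahnSeries.coeff_smul, smul_eq_mul, norm_mul]
  calc ‖a‖ * ‖g.coeff i‖ ≤ ‖a‖ * 1 :=
        mul_le_mul_of_nonneg_left (hg i hi) (norm_nonneg a)
    _ = ‖a‖ := mul_one _

lemma laurent_bdd_support {q : ℕ} (hK : IsCharZeroLocalField K q) {B : Set (LaurentSeries K)}
    (hB : IsVNBounded K (laurentTop K) B) :
    ∃ N : ℤ, ∀ f ∈ B, ∀ i, i < N → f.coeff i = 0 := by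
  by_contra hcon
  push_neg at hcon
  choose f hfB idx hidx hne using hcon
  have hq1 : (1:ℝ) < q := by exact_mod_cast hK.one_lt_q
  have hq0 : (0:ℝ) < q := lt_trans one_pos hq1
  -- build a sequence of elements of B with nonzero coefficients at strictly decreasing
  -- negative indices
  have hstep : ∀ prev : ℤ, ∃ p : LaurentSeries K × ℤ,
      p.1 ∈ B ∧ p.2 < min prev 0 ∧ p.1.coeff p.2 ≠ 0 :=
    fun prev => ⟨(f (min prev 0), idx (min prev 0)),
      hfB _, hidx _, hne _⟩
  choose step h1 h2 h3 using hstep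
  set seq : ℕ → LaurentSeries K × ℤ :=
    fun k => Nat.rec (step 0) (fun _ ih => step ih.2) k with hseq
  have hseqs : ∀ k, seq (k+1) = step (seq k).2 := fun _ => rfl
  have hFB : ∀ k, (seq k).1 ∈ B := by
    intro k
    cases k with
    | zero => exact h1 0
    | succ k => rw [hseqs k]; exact h1 _
  have hFne : ∀ k, (seq k).1.coeff (seq k).2 ≠ 0 := by
    intro k
    cases k with
    | zero => exact h3 0
    | succ k => rw [hseqs k]; exact h3 _
  have hIneg : ∀ k, (seq k).2 < 0 := by
    intro k
    cases k with
    | zero => exact lt_of_lt_of_le (h2 0) (min_le_right _ _)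
    | succ k => rw [hseqs k]; exact lt_of_lt_of_le (h2 _) (min_le_right _ _)
  have hdec : ∀ k, (seq (k+1)).2 < (seq k).2 := by
    intro k
    rw [hseqs k]
    exact lt_of_lt_of_le (h2 _) (min_le_left _ _)
  have hanti : StrictAnti (fun k => (seq k).2) := strictAnti_nat_of_succ_lt hdec
  have hinj : Function.Injective (fun k => (seq k).2) := hanti.injective
  -- the adversarial weight
  set w : ℤ → ℝ := fun j => if h : ∃ k, (seq k).2 = j then
      ‖(seq (Nat.find h)).1.coeff j‖ * ((q:ℝ))^(-(Nat.find h : ℤ)) else 1 with hwdef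
  have hwpos : ∀ j, 0 < w j := by
    intro j
    rw [hwdef]
    dsimp only
    split_ifs with h
    · have hsp : (seq (Nat.find h)).2 = j := Nat.find_spec h
      have hne' := hFne (Nat.find h)
      rw [hsp] at hne'
      exact mul_pos (norm_pos_iff.2 hne') (zpow_pos (by linarith) _)
    · exact one_pos
  obtain ⟨a, haB⟩ := hB (wlL K w 0) (wlL_lattice K hK hwpos 0) (wlL_open K hK.nonarch hwpos 0)
  rcases eq_or_ne a 0 with rfl | ha0
  · obtain ⟨g, _, hgf⟩ := Set.mem_smul_set.1 (haB (hFB 0))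
    rw [zero_smul] at hgf
    exact hFne 0 (by rw [← hgf]; exact HahnSeries.coeff_zero)
  · obtain ⟨n, hn⟩ := pow_unbounded_of_one_lt ‖a‖ hq1
    obtain ⟨g, hg, hgf⟩ := Set.mem_smul_set.1 (haB (hFB n))
    have hwn : w ((seq n).2) = ‖(seq n).1.coeff ((seq n).2)‖ * ((q:ℝ))^(-(n:ℤ)) := by
      rw [hwdef]
      dsimp only
      rw [dif_pos ⟨n, rfl⟩]
      have hfind : Nat.find (⟨n, rfl⟩ : ∃ k, (seq k).2 = (seq n).2) = n :=
        hinj (Nat.find_spec (⟨n, rfl⟩ : ∃ k, (seq k).2 = (seq n).2))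
      rw [hfind]
    have hcoeff : ‖g.coeff ((seq n).2)‖ ≤ w ((seq n).2) := hg _ (hIneg n)
    have heq : ‖(seq n).1.coeff ((seq n).2)‖ = ‖a‖ * ‖g.coeff ((seq n).2)‖ := by
      rw [← hgf, HahnSeries.coeff_smul, smul_eq_mul, norm_mul]
    set r := ‖(seq n).1.coeff ((seq n).2)‖ with hrdef
    have hr : 0 < r := norm_pos_iff.2 (hFne n)
    have hle : r ≤ ‖a‖ * (r * ((q:ℝ))^(-(n:ℤ))) := by
      calc r = ‖a‖ * ‖g.coeff ((seq n).2)‖ := heq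
        _ ≤ ‖a‖ * (r * ((q:ℝ))^(-(n:ℤ))) :=
          mul_le_mul_of_nonneg_left (le_trans hcoeff (le_of_eq hwn)) (norm_nonneg a)
    rw [zpow_neg, zpow_natCast] at hle
    have hQ : (0:ℝ) < (q:ℝ)^n := by positivity
    have hlt : ‖a‖ * (r * ((q:ℝ)^n)⁻¹) < (q:ℝ)^n * (r * ((q:ℝ)^n)⁻¹) :=
      mul_lt_mul_of_pos_right hn (by positivity)
    have hcalc : (q:ℝ)^n * (r * ((q:ℝ)^n)⁻¹) = r := by field_simp
    rw [hcalc] at hlt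
    rw [mul_comm r] at hle
    rw [← mul_assoc] at hle hlt
    linarith

lemma laurent_prod_support {N₁ N₂ : ℤ} {x y : LaurentSeries K}
    (hx : ∀ i, i < N₁ → x.coeff i = 0) (hy : ∀ i, i < N₂ → y.coeff i = 0) :
    ∀ k, k < N₁ + N₂ → (x * y).coeff k = 0 := by
  intro k hk
  by_contra h
  have hk' : k ∈ (x*y).support := (HahnSeries.mem_support _ _).2 h
  have hmem := HahnSeries.support_mul_subset hk'
  obtain ⟨i, hi, j, hj, rfl⟩ := Set.mem_add.1 hmem
  have hiN : N₁ ≤ i := not_lt.1 fun hc => ((HahnSeries.mem_support _ _).1 hi) (hx i hc)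
  have hjN : N₂ ≤ j := not_lt.1 fun hc => ((HahnSeries.mem_support _ _).1 hj) (hy j hc)
  omega

lemma laurent_prod_coeff_bound (hna : ∀ x y : K, ‖x + y‖ ≤ max ‖x‖ ‖y‖)
    {N₁ N₂ : ℤ} {C₁ C₂ : ℝ} (hC₁ : 0 ≤ C₁) (hC₂ : 0 ≤ C₂) {x y : LaurentSeries K} {N : ℤ}
    (hx0 : ∀ i, i < N₁ → x.coeff i = 0) (hy0 : ∀ i, i < N₂ → y.coeff i = 0)
    (hx : ∀ i, i < N - N₂ → ‖x.coeff i‖ ≤ C₁) (hy : ∀ j, j < N - N₁ → ‖y.coeff j‖ ≤ C₂) :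
    ∀ k, k < N → ‖(x * y).coeff k‖ ≤ C₁ * C₂ := by
  intro k hk
  rw [HahnSeries.coeff_mul]
  apply aux_norm_sum_le hna _ _ (mul_nonneg hC₁ hC₂)
  rintro ⟨i, j⟩ hij
  rw [Finset.mem_addAntidiagonal] at hij
  obtain ⟨hi, hj, hsum⟩ := hij
  have hiN : N₁ ≤ i := not_lt.1 fun hc => ((HahnSeries.mem_support _ _).1 hi) (hx0 i hc)
  have hjN : N₂ ≤ j := not_lt.1 fun hc => ((HahnSeries.mem_support _ _).1 hj) (hy0 j hc)
  have h1 : i < N - N₂ := by omega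
  have h2 : j < N - N₁ := by omega
  rw [norm_mul]
  exact mul_le_mul (hx i h1) (hy j h2) (norm_nonneg _) hC₁

lemma laurent_bdd_of {q : ℕ} (hK : IsCharZeroLocalField K q) {B' : Set (LaurentSeries K)}
    (hsup : ∃ M : ℤ, ∀ f ∈ B', ∀ i, i < M → f.coeff i = 0)
    (hco : ∀ N : ℤ, ∃ C, 0 ≤ C ∧ ∀ f ∈ B', ∀ i, i < N → ‖f.coeff i‖ ≤ C) :
    IsVNBounded K (laurentTop K) B' := by
  intro Λ hlat hopen
  obtain ⟨M, hM⟩ := hsup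
  obtain ⟨S, hS, hSΛ⟩ := exists_basic_subset ⟨_, laurentBasic_univ K⟩
    (fun S hS T hT => ⟨S ∩ T, laurentBasic_inter K hS hT, le_refl _⟩) hopen hlat.1.1
  obtain ⟨U, hU, ⟨N, hN⟩, rfl⟩ := hS
  obtain ⟨C, hC0, hC⟩ := hco N
  have hballs : ∀ i : ℤ, ∃ ρ : ℝ, 0 < ρ ∧ {x : K | ‖x‖ ≤ ρ} ⊆ U i := by
    intro i
    obtain ⟨ε, hε, hb⟩ := Metric.isOpen_iff.1 (hU i).1 0 (hU i).2
    refine ⟨ε/2, by positivity, fun x hx => ?_⟩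
    apply hb
    rw [Metric.mem_ball, dist_zero_right]
    exact lt_of_le_of_lt hx (by linarith)
  choose ρ hρpos hρsub using hballs
  set T := Finset.Icc M (N - 1) with hTdef
  set ρm : ℝ := if hT : T.Nonempty then min 1 (T.inf' hT ρ) else 1 with hρm
  have hρm_pos : 0 < ρm := by
    rw [hρm]
    split_ifs with hT
    · exact lt_min one_pos ((Finset.lt_inf'_iff hT).2 fun i _ => hρpos i)
    · exact one_pos
  have hρm_le : ∀ i, M ≤ i → i < N → ρm ≤ ρ i := by
    intro i hm1 hm2
    have hi : i ∈ T := Finset.mem_Icc.2 ⟨hm1, by omega⟩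
    rw [hρm, dif_pos ⟨i, hi⟩]
    exact le_trans (min_le_right _ _) (Finset.inf'_le _ hi)
  obtain ⟨a, ha0, haR⟩ := aux_exists_norm_ge hK ((C + 1) / ρm)
  have hapos : 0 < ‖a‖ := lt_of_lt_of_le (by positivity) haR
  refine ⟨a, fun f hf => ?_⟩
  have hmem : a⁻¹ • f ∈ {f : LaurentSeries K | ∀ i, f.coeff i ∈ U i} := by
    intro i
    rw [HahnSeries.coeff_smul, smul_eq_mul]
    rcases le_or_gt N i with h | h
    · rw [hN i h]; trivial
    rcases lt_or_ge i M with h2 | h2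
    · rw [hM f hf i h2, mul_zero]
      exact (hU i).2
    · apply hρsub i
      show ‖a⁻¹ * f.coeff i‖ ≤ ρ i
      rw [norm_mul, norm_inv]
      have h3 : ‖a‖⁻¹ * ‖f.coeff i‖ ≤ ‖a‖⁻¹ * C :=
        mul_le_mul_of_nonneg_left (hC f hf i h) (by positivity)
      refine le_trans h3 (le_trans ?_ (hρm_le i h2 h))
      rw [div_le_iff₀ hρm_pos] at haR
      rw [inv_mul_le_iff₀ hapos]
      nlinarith
  have hfeq : f = a • (a⁻¹ • f) := (smul_inv_smul₀ ha0 f).symm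
  rw [hfeq]
  exact Set.smul_mem_smul_set (hSΛ hmem)

/-! #### Weighted-ball lattices in `K{{t}}` -/

/-- The weighted-ball set `{f ∈ K{{t}} | ‖f_i‖ ≤ w i for all i}`. -/
def wlM (w : ℤ → ℝ) : Set (Mt K) := {f | ∀ i, ‖f.1 i‖ ≤ w i}

lemma mem_wlM {w : ℤ → ℝ} {f : Mt K} : f ∈ wlM K w ↔ ∀ i, ‖f.1 i‖ ≤ w i := Iff.rfl

lemma wlM_mem_basic {q : ℕ} (hna : ∀ x y : K, ‖x + y‖ ≤ max ‖x‖ ‖y‖) {w : ℤ → ℝ}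
    (hw : ∀ i, 0 < w i) (hlow : ∃ c : ℤ, ∀ i, ((q:ℝ))^(-c) ≤ w i)
    (hgrow : ∀ l : ℤ, ∃ i0 : ℤ, ∀ i, i0 ≤ i → ((q:ℝ))^(-l) ≤ w i) :
    wlM K w ∈ mixedBasic K q := by
  refine ⟨fun i => {x : K | ‖x‖ ≤ w i}, fun i => ⟨aux_ball_isOpen hna (hw i), by
      simp only [Set.mem_setOf_eq, norm_zero]; exact (hw i).le⟩, ?_, ?_, rfl⟩
  · obtain ⟨c, hc⟩ := hlow
    exact ⟨c, fun i => aux_ball_mono (hc i)⟩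
  · intro l
    obtain ⟨i0, hi0⟩ := hgrow l
    exact ⟨i0, fun i hi => aux_ball_mono (hi0 i hi)⟩

lemma wlM_add_closed (hna : ∀ x y : K, ‖x + y‖ ≤ max ‖x‖ ‖y‖) {w : ℤ → ℝ}
    {x y : Mt K} (hx : x ∈ wlM K w) (hy : y ∈ wlM K w) : x + y ∈ wlM K w := by
  rw [mem_wlM] at *
  intro i
  have hc : (x + y).1 i = x.1 i + y.1 i := rfl
  rw [hc]
  exact (hna _ _).trans (max_le (hx i) (hy i))

lemma wlM_open {q : ℕ} (hna : ∀ x y : K, ‖x + y‖ ≤ max ‖x‖ ‖y‖) {w : ℤ → ℝ}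
    (hw : ∀ i, 0 < w i) (hlow : ∃ c : ℤ, ∀ i, ((q:ℝ))^(-c) ≤ w i)
    (hgrow : ∀ l : ℤ, ∃ i0 : ℤ, ∀ i, i0 ≤ i → ((q:ℝ))^(-l) ≤ w i) :
    IsOpen[mixedTop K q] (wlM K w) :=
  isOpen_of_mem_basic (wlM_mem_basic K hna hw hlow hgrow)
    (fun _ hx _ hy => wlM_add_closed K hna hx hy)

lemma wlM_lattice {q : ℕ} (hK : IsCharZeroLocalField K q) {w : ℤ → ℝ}
    (hw : ∀ i, 0 < w i) (hlow : ∃ c : ℤ, ∀ i, ((q:ℝ))^(-c) ≤ w i) :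
    IsLatticeSet K (wlM K w) := by
  constructor
  · refine ⟨?_, fun x hx y hy => wlM_add_closed K hK.nonarch hx hy, ?_⟩
    · rw [mem_wlM]
      intro i
      have hc : (0 : Mt K).1 i = 0 := rfl
      rw [hc, norm_zero]
      exact (hw i).le
    · intro c hc x hx
      rw [mem_wlM] at *
      intro i
      have hco : (c • x).1 i = c * x.1 i := rfl
      rw [hco, norm_mul]
      calc ‖c‖ * ‖x.1 i‖ ≤ 1 * w i := mul_le_mul hc (hx i) (norm_nonneg _) one_pos.le
        _ = w i := one_mul _
  · intro v
    obtain ⟨c, hc⟩ := hlow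
    have hq1 : (1:ℝ) < q := by exact_mod_cast hK.one_lt_q
    have hQc : (0:ℝ) < ((q:ℝ))^(-c) := zpow_pos (by linarith) _
    obtain ⟨Cv, hCv⟩ := v.2.1
    have hCv0 : 0 ≤ Cv := le_trans (norm_nonneg _) (hCv 0)
    obtain ⟨a, ha0, ha⟩ := aux_exists_norm_le hK
      (show (0:ℝ) < ((q:ℝ))^(-c) / (Cv + 1) by positivity)
    refine ⟨a, ha0, ?_⟩
    rw [mem_wlM]
    intro i
    have hco : (a • v).1 i = a * v.1 i := rfl
    rw [hco, norm_mul]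
    calc ‖a‖ * ‖v.1 i‖ ≤ (((q:ℝ))^(-c) / (Cv + 1)) * (Cv + 1) := by
          apply mul_le_mul ha (le_trans (hCv i) (by linarith)) (norm_nonneg _) (by positivity)
      _ = ((q:ℝ))^(-c) := div_mul_cancel₀ _ (by positivity)
      _ ≤ w i := hc i

/-! #### Bounded sets in `K{{t}}` -/

lemma mixed_bdd_coeff_lt {q : ℕ} (hK : IsCharZeroLocalField K q) {B : Set (Mt K)}
    (hB : IsVNBounded K (mixedTop K q) B) (N₀ : ℤ) :
    ∃ C, 0 ≤ C ∧ ∀ f ∈ B, ∀ i, i < N₀ → ‖f.1 i‖ ≤ C := by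
  have hq1 : (1:ℝ) < q := by exact_mod_cast hK.one_lt_q
  set w : ℤ → ℝ := fun i => (q:ℝ) ^ (max 0 (i - N₀)) with hwdef
  have hw : ∀ i, 0 < w i := fun i => zpow_pos (by linarith) _
  have hlow : ∃ c : ℤ, ∀ i, ((q:ℝ))^(-c) ≤ w i := by
    refine ⟨0, fun i => ?_⟩
    rw [neg_zero, zpow_zero]
    exact one_le_zpow₀ hq1.le (le_max_left _ _)
  have hgrow : ∀ l : ℤ, ∃ i0 : ℤ, ∀ i, i0 ≤ i → ((q:ℝ))^(-l) ≤ w i := by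
    intro l
    refine ⟨N₀ - l, fun i hi => ?_⟩
    exact zpow_le_zpow_right₀ hq1.le (le_trans (by omega) (le_max_right 0 (i - N₀)))
  obtain ⟨a, haB⟩ := hB (wlM K w) (wlM_lattice K hK hw hlow)
    (wlM_open K hK.nonarch hw hlow hgrow)
  refine ⟨‖a‖, norm_nonneg a, fun f hf i hi => ?_⟩
  obtain ⟨g, hg, rfl⟩ := Set.mem_smul_set.1 (haB hf)
  have hco : (a • g).1 i = a * g.1 i := rfl
  rw [hco, norm_mul]
  have hwi : w i = 1 := by
    rw [hwdef]
    dsimp only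
    rw [max_eq_left (by omega : i - N₀ ≤ 0), zpow_zero]
  calc ‖a‖ * ‖g.1 i‖ ≤ ‖a‖ * w i := mul_le_mul_of_nonneg_left (hg i) (norm_nonneg a)
    _ = ‖a‖ := by rw [hwi, mul_one]

lemma mixed_bdd_coeff {q : ℕ} (hK : IsCharZeroLocalField K q) {B : Set (Mt K)}
    (hB : IsVNBounded K (mixedTop K q) B) :
    ∃ C, 0 ≤ C ∧ ∀ f ∈ B, ∀ i, ‖f.1 i‖ ≤ C := by
  have hq1 : (1:ℝ) < q := by exact_mod_cast hK.one_lt_q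
  have hq0 : (0:ℝ) < q := lt_trans one_pos hq1
  by_contra hcon
  push_neg at hcon
  have hbad : ∀ C : ℝ, 0 ≤ C → ∃ f ∈ B, ∃ i, C < ‖f.1 i‖ := fun C hC => hcon C hC
  -- recursively construct witnesses with strictly increasing indices
  have hstep : ∀ (k : ℕ) (prev : ℤ), ∃ p : Mt K × ℤ,
      p.1 ∈ B ∧ (q:ℝ)^(3*k) < ‖p.1.1 p.2‖ ∧ prev < p.2 := by
    intro k prev
    obtain ⟨C, hC0, hC⟩ := mixed_bdd_coeff_lt K hK hB (prev + 1)
    obtain ⟨f, hf, i, hi⟩ := hbad (max C ((q:ℝ)^(3*k)))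
      (le_trans hC0 (le_max_left _ _))
    refine ⟨(f, i), hf, lt_of_le_of_lt (le_max_right _ _) hi, ?_⟩
    by_contra hle
    push_neg at hle
    exact absurd (hC f hf i (by omega)) (not_le.2 (lt_of_le_of_lt (le_max_left _ _) hi))
  choose step h1 h2 h3 using hstep
  set seq : ℕ → Mt K × ℤ :=
    fun k => Nat.rec (step 0 0) (fun k ih => step (k+1) ih.2) k with hseqdef
  have hseqs : ∀ k, seq (k+1) = step (k+1) (seq k).2 := fun _ => rfl
  have hFB : ∀ k, (seq k).1 ∈ B := by
    intro k
    cases k with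
    | zero => exact h1 0 0
    | succ k => rw [hseqs k]; exact h1 _ _
  have hFn : ∀ k, (q:ℝ)^(3*k) < ‖(seq k).1.1 ((seq k).2)‖ := by
    intro k
    cases k with
    | zero => exact h2 0 0
    | succ k => rw [hseqs k]; exact h2 _ _
  have hinc : ∀ k, (seq k).2 < (seq (k+1)).2 := by
    intro k
    rw [hseqs k]
    exact h3 _ _
  have hmono : StrictMono (fun k => (seq k).2) := strictMono_nat_of_lt_succ hinc
  have hge : ∀ k : ℕ, (seq 0).2 + k ≤ (seq k).2 := by
    intro k
    induction k with
    | zero => simp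
    | succ k ih =>
      have := hinc k
      omega
  have hIub : ∀ i : ℤ, ∃ k : ℕ, i < (seq k).2 := by
    intro i
    refine ⟨(i - (seq 0).2 + 1).toNat, ?_⟩
    have h4 := hge (i - (seq 0).2 + 1).toNat
    have h5 : (i - (seq 0).2 + 1) ≤ ((i - (seq 0).2 + 1).toNat : ℤ) := Int.self_le_toNat _
    omega
  set m : ℤ → ℕ := fun i => Nat.find (hIub i) with hmdef
  have hm_spec : ∀ i, i < (seq (m i)).2 := fun i => Nat.find_spec (hIub i)
  have hm_min : ∀ i, ∀ k, k < m i → (seq k).2 ≤ i := by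
    intro i k hk
    have := Nat.find_min (hIub i) hk
    omega
  set w : ℤ → ℝ := fun i => (q:ℝ) ^ ((m i : ℤ)) with hwdef
  have hw : ∀ i, 0 < w i := fun i => zpow_pos (by linarith) _
  have hlow : ∃ c : ℤ, ∀ i, ((q:ℝ))^(-c) ≤ w i := by
    refine ⟨0, fun i => ?_⟩
    rw [neg_zero, zpow_zero]
    exact one_le_zpow₀ hq1.le (by positivity)
  have hgrow : ∀ l : ℤ, ∃ i0 : ℤ, ∀ i, i0 ≤ i → ((q:ℝ))^(-l) ≤ w i := by
    intro l
    refine ⟨(seq ((-l).toNat)).2, fun i hi => ?_⟩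
    have hml : (-l).toNat < m i := by
      by_contra hle
      push_neg at hle
      have h6 : (seq (m i)).2 ≤ (seq ((-l).toNat)).2 := hmono.monotone hle
      have h7 := hm_spec i
      omega
    have h8 : -l ≤ (m i : ℤ) := by
      have h9 : (-l) ≤ ((-l).toNat : ℤ) := Int.self_le_toNat _
      omega
    exact zpow_le_zpow_right₀ hq1.le h8
  obtain ⟨a, haB⟩ := hB (wlM K w) (wlM_lattice K hK hw hlow)
    (wlM_open K hK.nonarch hw hlow hgrow)
  rcases eq_or_ne a 0 with rfl | ha0
  · obtain ⟨g, _, hgf⟩ := Set.mem_smul_set.1 (haB (hFB 0))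
    rw [zero_smul] at hgf
    have h10 := hFn 0
    rw [← hgf] at h10
    have h11 : ((0 : Mt K)).1 ((seq 0).2) = 0 := rfl
    rw [h11, norm_zero] at h10
    norm_num at h10
  · obtain ⟨n, hn⟩ := pow_unbounded_of_one_lt ‖a‖ hq1
    set k := n + 1 with hkdef
    obtain ⟨g, hg, hgf⟩ := Set.mem_smul_set.1 (haB (hFB k))
    have hmIk : m ((seq k).2) = k + 1 := by
      have hub : m ((seq k).2) ≤ k + 1 := Nat.find_le (hinc k)
      have hlb : k < m ((seq k).2) := by
        by_contra hle
        push_neg at hle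
        have h12 : (seq (m ((seq k).2))).2 ≤ (seq k).2 := hmono.monotone hle
        have h13 := hm_spec ((seq k).2)
        omega
      omega
    have hwIk : w ((seq k).2) = (q:ℝ)^(k+1) := by
      rw [hwdef]
      dsimp only
      rw [hmIk]
      rw [zpow_natCast]
    have hgb : ‖g.1 ((seq k).2)‖ ≤ (q:ℝ)^(k+1) := by
      rw [← hwIk]; exact hg _
    have hchain : (q:ℝ)^(3*k) < (q:ℝ)^(2*k) := by
      calc (q:ℝ)^(3*k) < ‖(seq k).1.1 ((seq k).2)‖ := hFn k
        _ = ‖a‖ * ‖g.1 ((seq k).2)‖ := by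
            rw [← hgf]
            have hco : (a • g).1 ((seq k).2) = a * g.1 ((seq k).2) := rfl
            rw [hco, norm_mul]
        _ ≤ ‖a‖ * (q:ℝ)^(k+1) := mul_le_mul_of_nonneg_left hgb (norm_nonneg a)
        _ < (q:ℝ)^n * (q:ℝ)^(k+1) := mul_lt_mul_of_pos_right hn (by positivity)
        _ = (q:ℝ)^(2*k) := by
            rw [← pow_add]
            congr 1
            omega
    have h14 : 3*k < 2*k := (pow_lt_pow_iff_right₀ hq1).1 hchain
    omega

lemma mixed_bdd_of_uniform {q : ℕ} (hK : IsCharZeroLocalField K q) {B' : Set (Mt K)}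
    (hC : ∃ C, 0 ≤ C ∧ ∀ f ∈ B', ∀ i, ‖f.1 i‖ ≤ C) :
    IsVNBounded K (mixedTop K q) B' := by
  have hq1 : (1:ℝ) < q := by exact_mod_cast hK.one_lt_q
  have hq0 : (0:ℝ) < q := lt_trans one_pos hq1
  intro Λ hlat hopen
  obtain ⟨S, hS, hSΛ⟩ := exists_basic_subset ⟨_, mixedBasic_univ K q⟩
    (fun S hS T hT => ⟨S ∩ T, mixedBasic_inter K hq1.le hS hT, le_refl _⟩) hopen hlat.1.1
  obtain ⟨Vs, hVs, ⟨c, hc⟩, hgrow, rfl⟩ := hS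
  obtain ⟨C, hC0, hCb⟩ := hC
  have hqc : (0:ℝ) < (q:ℝ)^c := zpow_pos hq0 _
  obtain ⟨a, ha0, haR⟩ := aux_exists_norm_ge hK (max 1 (C * (q:ℝ)^c))
  have hapos : 0 < ‖a‖ := lt_of_lt_of_le one_pos (le_trans (le_max_left _ _) haR)
  refine ⟨a, fun f hf => ?_⟩
  have hmem : a⁻¹ • f ∈ {f : Mt K | ∀ i, f.1 i ∈ Vs i} := by
    intro i
    apply hc i
    show ‖(a⁻¹ • f).1 i‖ ≤ (q:ℝ)^(-c)
    have hco : (a⁻¹ • f).1 i = a⁻¹ * f.1 i := rfl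
    rw [hco, norm_mul, norm_inv]
    have h1 : ‖a‖⁻¹ * ‖f.1 i‖ ≤ ‖a‖⁻¹ * C :=
      mul_le_mul_of_nonneg_left (hCb f hf i) (by positivity)
    refine h1.trans ?_
    rw [inv_mul_le_iff₀ hapos, zpow_neg, ← div_eq_mul_inv, le_div_iff₀ hqc]
    exact le_trans (le_max_right 1 _) haR
  have hfeq : f = a • (a⁻¹ • f) := (smul_inv_smul₀ ha0 f).symm
  rw [hfeq]
  exact Set.smul_mem_smul_set (hSΛ hmem)

lemma mixed_prod_coeff {q : ℕ} (hK : IsCharZeroLocalField K q) {B₁ B₂ : Set (Mt K)}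
    {C₁ C₂ : ℝ} (hC₁ : 0 ≤ C₁) (hC₂ : 0 ≤ C₂)
    (h1 : ∀ f ∈ B₁, ∀ i, ‖f.1 i‖ ≤ C₁) (h2 : ∀ f ∈ B₂, ∀ i, ‖f.1 i‖ ≤ C₂) :
    ∀ f ∈ Set.image2 (mixedMul K) B₁ B₂, ∀ i, ‖f.1 i‖ ≤ C₁ * C₂ := by
  rintro f hf i
  obtain ⟨x, hx, y, hy, rfl⟩ := hf
  rw [mixedMul]
  split_ifs with h
  · show ‖mixedMulCoeff K x y i‖ ≤ C₁ * C₂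
    rw [mixedMulCoeff]
    apply aux_norm_tsum_le hK.nonarch _ (mul_nonneg hC₁ hC₂)
    intro j
    rw [norm_mul]
    exact mul_le_mul (h1 x hx j) (h2 y hy _) (norm_nonneg _) hC₁
  · show ‖(0 : Mt K).1 i‖ ≤ C₁ * C₂
    have hco : (0 : Mt K).1 i = 0 := rfl
    rw [hco, norm_zero]
    exact mul_nonneg hC₁ hC₂

/-- For `F = K((t))` and for `F = K{{t}}` with the higher topology, the
multiplication map `μ : F × F → F` is bounded with respect to the product bornology: if `B₁`
and `B₂` are bounded subsets of `F` then `μ(B₁ × B₂) = {xy : x ∈ B₁, y ∈ B₂}` is bounded. -/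
theorem statement11 (q : ℕ) (hK : IsCharZeroLocalField K q) :
    (∀ B₁ B₂ : Set (LaurentSeries K),
      IsVNBounded K (laurentTop K) B₁ → IsVNBounded K (laurentTop K) B₂ →
      IsVNBounded K (laurentTop K) (Set.image2 (fun x y => x * y) B₁ B₂)) ∧
    (∀ B₁ B₂ : Set (Mt K),
      IsVNBounded K (mixedTop K q) B₁ → IsVNBounded K (mixedTop K q) B₂ →
      IsVNBounded K (mixedTop K q) (Set.image2 (mixedMul K) B₁ B₂)) := by
  constructor
  · intro B₁ B₂ h1 h2
    obtain ⟨N₁, hN₁⟩ := laurent_bdd_support K hK h1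
    obtain ⟨N₂, hN₂⟩ := laurent_bdd_support K hK h2
    apply laurent_bdd_of K hK
    · refine ⟨N₁ + N₂, ?_⟩
      rintro f hf i hi
      obtain ⟨x, hx, y, hy, rfl⟩ := hf
      exact laurent_prod_support K (hN₁ x hx) (hN₂ y hy) i hi
    · intro N
      obtain ⟨C₁, hC₁0, hC₁⟩ := laurent_bdd_coeff K hK h1 (N - N₂)
      obtain ⟨C₂, hC₂0, hC₂⟩ := laurent_bdd_coeff K hK h2 (N - N₁)
      refine ⟨C₁ * C₂, mul_nonneg hC₁0 hC₂0, ?_⟩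
      rintro f hf i hi
      obtain ⟨x, hx, y, hy, rfl⟩ := hf
      exact laurent_prod_coeff_bound K hK.nonarch hC₁0 hC₂0 (hN₁ x hx) (hN₂ y hy)
        (hC₁ x hx) (hC₂ y hy) i hi
  · intro B₁ B₂ h1 h2
    obtain ⟨C₁, hC₁0, hC₁⟩ := mixed_bdd_coeff K hK h1
    obtain ⟨C₂, hC₂0, hC₂⟩ := mixed_bdd_coeff K hK h2
    exact mixed_bdd_of_uniform K hK
      ⟨C₁ * C₂, mul_nonneg hC₁0 hC₂0, mixed_prod_coeff K hK hC₁0 hC₂0 hC₁ hC₂⟩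

end TwoDimLF
end
end

section
/- Every basic bounded 𝒪-submodule B = Σ_{i∈ℤ} 𝔭^{k_i} t^i of K((t)), where (k_i)_{i∈ℤ} ⊂ ℤ ∪ {∞} and k_i = ∞ for all i below some index i_0, is both compactoid and c-compact for the higher topology. -/
/-!
Common setting: `K` is a characteristic-zero local field (a finite extension of `ℚ_p`)
with ring of integers `𝒪 = {c : K | ‖c‖ ≤ 1}`, maximal ideal `𝔭 = {c : K | ‖c‖ < 1}`,
residue field of cardinality `q` and the absolute value normalised by `‖π‖ = q⁻¹`.
We formalise the two-dimensional local fields `K((t))` (as `LaurentSeries K`) and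
`K{{t}}` (as the submodule `mixedCarrier K` of `ℤ → K`), their higher topologies, and
the relevant functional-analytic notions (lattices, seminorms, boundedness,
c-compactness, compactoidness, completeness for nets, duality).
-/

open Filter Topology Set Pointwise
open scoped Classical

noncomputable section

namespace TwoDimLF

variable (K : Type) [NontriviallyNormedField K]

/-! ### Auxiliary lemmas for Statement 14 -/

section Aux

lemma pT_top (q : ℕ) : pT K q ⊤ = {(0 : K)} := rfl

lemma pT_coe (q : ℕ) (m : ℤ) : pT K q (m : ℤ) = {x : K | ‖x‖ ≤ (q : ℝ) ^ (-m)} := rfl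

lemma zero_mem_pT {q : ℕ} (hq : 1 < q) (n : WithTop ℤ) : (0 : K) ∈ pT K q n := by
  induction n using WithTop.recTopCoe with
  | top => exact rfl
  | coe m =>
    have hq0 : (0 : ℝ) < (q : ℝ) := by exact_mod_cast Nat.lt_of_lt_of_le Nat.zero_lt_one hq.le
    show ‖(0 : K)‖ ≤ (q : ℝ) ^ (-m)
    rw [norm_zero]
    exact (zpow_pos hq0 _).le

lemma isCompact_pT {q : ℕ} (hq : 1 < q) (hlc : LocallyCompactSpace K) (n : WithTop ℤ) :
    IsCompact (pT K q n) := by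
  have : ProperSpace K := ProperSpace.of_locallyCompactSpace K
  induction n using WithTop.recTopCoe with
  | top => exact isCompact_singleton
  | coe m =>
    have : pT K q (m : ℤ) = Metric.closedBall (0 : K) ((q : ℝ) ^ (-m)) := by
      ext x
      simp [pT_coe, Metric.mem_closedBall, dist_zero_right]
    rw [this]
    exact isCompact_closedBall 0 _

variable {V : Type} [AddCommGroup V] [Module K V]

lemma IsOSubmodule.neg_mem' {Λ : Set V} (h : IsOSubmodule K Λ) {a : V} (ha : a ∈ Λ) :
    -a ∈ Λ := by
  have := h.2.2 (-1 : K) (by simp) a ha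
  rwa [neg_one_smul] at this

lemma IsOSubmodule.sub_mem' {Λ : Set V} (h : IsOSubmodule K Λ) {a b : V}
    (ha : a ∈ Λ) (hb : b ∈ Λ) : a - b ∈ Λ := by
  have := h.2.1 a ha (-b) (h.neg_mem' K hb)
  rwa [← sub_eq_add_neg] at this

/-- Every open set containing `0` in the higher topology on `K((t))` contains a basic
neighbourhood of zero. -/
lemma exists_basic {Λ : Set (LaurentSeries K)} (h0 : (0 : LaurentSeries K) ∈ Λ)
    (hΛ : IsOpen[laurentTop K] Λ) :
    ∃ U : ℤ → Set K, (∀ i, IsOpen (U i) ∧ (0 : K) ∈ U i) ∧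
      (∃ N : ℤ, ∀ i, N ≤ i → U i = Set.univ) ∧
      {f : LaurentSeries K | ∀ i, f.coeff i ∈ U i} ⊆ Λ := by
  have h : Λ ∈ Filter.map (fun v => (0 : LaurentSeries K) + v)
      (⨅ U ∈ laurentBasic K, Filter.principal U) := hΛ 0 h0
  rw [Filter.mem_map] at h
  have hpre : (fun v => (0 : LaurentSeries K) + v) ⁻¹' Λ = Λ := by ext v; simp
  rw [hpre] at h
  have hdir : DirectedOn
      ((fun S : Set (LaurentSeries K) => Filter.principal S) ⁻¹'o (· ≥ ·))
      (laurentBasic K) := by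
    rintro S₁ ⟨U₁, hU₁, ⟨N₁, hN₁⟩, rfl⟩ S₂ ⟨U₂, hU₂, ⟨N₂, hN₂⟩, rfl⟩
    refine ⟨{f : LaurentSeries K | ∀ i, f.coeff i ∈ U₁ i ∩ U₂ i},
      ⟨fun i => U₁ i ∩ U₂ i,
        fun i => ⟨(hU₁ i).1.inter (hU₂ i).1, (hU₁ i).2, (hU₂ i).2⟩,
        ⟨max N₁ N₂, fun i hi => by
          show U₁ i ∩ U₂ i = Set.univ
          rw [hN₁ i (le_trans (le_max_left _ _) hi), hN₂ i (le_trans (le_max_right _ _) hi)]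
          simp⟩, rfl⟩, ?_, ?_⟩
    · exact Filter.principal_mono.mpr fun f hf i => (hf i).1
    · exact Filter.principal_mono.mpr fun f hf i => (hf i).2
  have hne : (laurentBasic K).Nonempty := by
    refine ⟨Set.univ, fun _ => Set.univ, fun i => ⟨isOpen_univ, Set.mem_univ 0⟩,
      ⟨0, fun _ _ => rfl⟩, ?_⟩
    ext f; simp
  rw [Filter.mem_biInf_of_directed hdir hne] at h
  obtain ⟨S, ⟨U, hU, hN, rfl⟩, hmem⟩ := h
  exact ⟨U, hU, hN, Filter.mem_principal.mp hmem⟩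

/-- The Laurent series with coefficients `g n` for `n ≥ i0` and `0` below `i0`. -/
def seriesOf (i0 : ℤ) (g : ℤ → K) : LaurentSeries K where
  coeff n := if n < i0 then 0 else g n
  isPWO_support' := by
    have hbdd : BddBelow (Function.support fun n : ℤ => if n < i0 then 0 else g n) :=
      ⟨i0, fun n hn => not_lt.1 fun h => hn (if_pos h)⟩
    exact Set.IsWF.isPWO hbdd.wellFoundedOn_lt

@[simp] lemma seriesOf_coeff (i0 : ℤ) (g : ℤ → K) (n : ℤ) :
    (seriesOf K i0 g).coeff n = if n < i0 then 0 else g n := rfl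

lemma sum_coeff {α : Type} (s : Finset α) (f : α → LaurentSeries K) (n : ℤ) :
    (∑ j ∈ s, f j).coeff n = ∑ j ∈ s, (f j).coeff n :=
  map_sum (HahnSeries.coeff.addMonoidHom n) f s

end Aux

/-- Every basic bounded `𝒪`-submodule `B = Σ_{i∈ℤ} 𝔭^{k_i} t^i` of
`K((t))`, where `(k_i) ⊆ ℤ ∪ {∞}` and `k_i = ∞` for all `i` below some index `i0`, is both
compactoid and c-compact for the higher topology. -/
theorem statement14 (q : ℕ) (hK : IsCharZeroLocalField K q)
    (k : ℤ → WithTop ℤ) (hk : ∃ i0 : ℤ, ∀ i : ℤ, i < i0 → k i = ⊤) :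
    IsCompactoid K (laurentTop K) (laurentPT K q k) ∧
    IsCCompact K (laurentTop K) (laurentPT K q k) := by
  obtain ⟨i0, hi0⟩ := hk
  have hq0 : (0 : ℝ) < (q : ℝ) := by
    exact_mod_cast Nat.lt_of_lt_of_le Nat.zero_lt_one hK.one_lt_q.le
  obtain ⟨π, hπ⟩ := hK.exists_uniformizer
  have hπ0 : π ≠ 0 := by
    intro h
    rw [h, norm_zero] at hπ
    have : (0 : ℝ) < (q : ℝ)⁻¹ := by positivity
    rw [← hπ] at this
    exact lt_irrefl _ this
  have hπnorm : ∀ e : ℤ, ‖π ^ e‖ = (q : ℝ) ^ (-e) := by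
    intro e
    rw [norm_zpow, hπ, inv_zpow, ← zpow_neg]
  constructor
  · -- Compactoid
    intro Λ hlat hopen
    obtain ⟨U, hU, ⟨N, hN⟩, hsub⟩ := exists_basic K hlat.1.1 hopen
    set m : ℕ := (N - i0).toNat with hm
    set e : ℤ → ℤ := fun i => WithTop.untopD 0 (k i) with he
    set v : Fin m → LaurentSeries K := fun j =>
      if k (i0 + ((j : ℕ) : ℤ)) = ⊤ then 0
      else HahnSeries.single (i0 + ((j : ℕ) : ℤ)) (π ^ e (i0 + ((j : ℕ) : ℤ))) with hv
    refine ⟨m, v, fun f hf => ?_⟩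
    set c : Fin m → K := fun j =>
      if k (i0 + ((j : ℕ) : ℤ)) = ⊤ then 0
      else f.coeff (i0 + ((j : ℕ) : ℤ)) * (π ^ e (i0 + ((j : ℕ) : ℤ)))⁻¹ with hc
    have hterm : ∀ (j : Fin m) (i : ℤ), i ≠ i0 + ((j : ℕ) : ℤ) → (c j • v j).coeff i = 0 := by
      intro j i hne
      by_cases htop : k (i0 + ((j : ℕ) : ℤ)) = ⊤
      · simp [hv, htop]
      · simp [hv, htop, HahnSeries.coeff_smul, HahnSeries.coeff_single_of_ne hne]
    have hterm2 : ∀ j : Fin m,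
        (c j • v j).coeff (i0 + ((j : ℕ) : ℤ)) = f.coeff (i0 + ((j : ℕ) : ℤ)) := by
      intro j
      by_cases htop : k (i0 + ((j : ℕ) : ℤ)) = ⊤
      · have h0 : f.coeff (i0 + ((j : ℕ) : ℤ)) ∈ pT K q (k (i0 + ((j : ℕ) : ℤ))) :=
          hf (i0 + ((j : ℕ) : ℤ))
        rw [htop, pT_top] at h0
        rw [Set.mem_singleton_iff.mp h0]
        simp [hv, htop]
      · have hne : π ^ e (i0 + ((j : ℕ) : ℤ)) ≠ 0 := zpow_ne_zero _ hπ0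
        rw [show c j = f.coeff (i0 + ((j : ℕ) : ℤ)) * (π ^ e (i0 + ((j : ℕ) : ℤ)))⁻¹ from
          by simp [hc, htop]]
        rw [show v j = HahnSeries.single (i0 + ((j : ℕ) : ℤ)) (π ^ e (i0 + ((j : ℕ) : ℤ))) from
          by simp [hv, htop]]
        rw [HahnSeries.coeff_smul, HahnSeries.coeff_single_same, smul_eq_mul,
          inv_mul_cancel_right₀ hne]
    have hsum : ∀ i : ℤ, i0 ≤ i → i < N → (∑ j, c j • v j).coeff i = f.coeff i := by
      intro i h1 h2
      have hlt : (i - i0).toNat < m := by omega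
      set j0 : Fin m := ⟨(i - i0).toNat, hlt⟩ with hj0
      have hij0 : i = i0 + ((j0 : ℕ) : ℤ) := by simp only [hj0]; omega
      rw [sum_coeff]
      rw [Finset.sum_eq_single j0]
      · rw [hij0]; exact hterm2 j0
      · intro b _ hb
        refine hterm b i fun hEq => hb (Fin.ext ?_)
        simp only [hj0]
        omega
      · intro h; exact absurd (Finset.mem_univ j0) h
    refine ⟨f - ∑ j, c j • v j, hsub fun i => ?_, c, ?_, by abel⟩
    · -- the remainder lies in the basic neighbourhood
      rw [HahnSeries.coeff_sub]
      by_cases hiN : N ≤ i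
      · rw [hN i hiN]; trivial
      by_cases hii0 : i0 ≤ i
      · rw [hsum i hii0 (not_le.1 hiN), sub_self]; exact (hU i).2
      · have hlt : i < i0 := not_le.1 hii0
        have hf0 : f.coeff i = 0 := by
          have h0 := hf i
          rw [hi0 i hlt, pT_top] at h0
          exact Set.mem_singleton_iff.mp h0
        have hsum0 : (∑ j, c j • v j).coeff i = 0 := by
          rw [sum_coeff]
          refine Finset.sum_eq_zero fun j _ => hterm j i (by omega)
        rw [hf0, hsum0, sub_zero]
        exact (hU i).2
    · -- the coefficients are integral
      intro j
      by_cases htop : k (i0 + ((j : ℕ) : ℤ)) = ⊤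
      · simp [hc, htop]
      · obtain ⟨a, ha⟩ := WithTop.ne_top_iff_exists.mp htop
        have hea : e (i0 + ((j : ℕ) : ℤ)) = a := by
          rw [he]; simp only [← ha, WithTop.untopD_coe]
        have hfj : ‖f.coeff (i0 + ((j : ℕ) : ℤ))‖ ≤ (q : ℝ) ^ (-a) := by
          have h0 := hf (i0 + ((j : ℕ) : ℤ))
          rw [← ha] at h0
          exact h0
        rw [show c j = f.coeff (i0 + ((j : ℕ) : ℤ)) * (π ^ e (i0 + ((j : ℕ) : ℤ)))⁻¹ from
          by simp [hc, htop]]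
        rw [hea, norm_mul, norm_inv, hπnorm, ← div_eq_mul_inv]
        exact (div_le_one (zpow_pos hq0 _)).mpr hfj
  · -- c-compact
    intro ι L hL hdir x hxB hcompat
    by_cases hι : Nonempty ι
    · haveI := hι
      set Bp : Set (ℤ → K) := Set.pi Set.univ (fun n => pT K q (k n)) with hBp
      have hBpc : IsCompact Bp :=
        isCompact_univ_pi fun n => isCompact_pT K hK.one_lt_q hK.locallyCompact (k n)
      set C : ι → Set (ℤ → K) := fun i => Bp ∩ {g | seriesOf K i0 g - x i ∈ L i} with hC
      have hser : ∀ i : ι, seriesOf K i0 ((x i).coeff) = x i := by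
        intro i
        ext n
        show (if n < i0 then 0 else (x i).coeff n) = (x i).coeff n
        split
        · next h =>
            have h0 : (x i).coeff n ∈ pT K q (k n) := hxB i n
            rw [hi0 n h, pT_top] at h0
            exact (Set.mem_singleton_iff.mp h0).symm
        · rfl
      have hsubC : ∀ i j : ι, L j ⊆ L i → C j ⊆ C i := by
        intro i j hij g hg
        refine ⟨hg.1, ?_⟩
        have h1 : seriesOf K i0 g - x j ∈ L i := hij hg.2
        have h2 : x j - x i ∈ L i := hcompat i j hij
        have h3 := (hL i).1.1.2.1 _ h1 _ h2
        rwa [sub_add_sub_cancel] at h3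
      have hCne : ∀ i, (C i).Nonempty := by
        intro i
        refine ⟨(x i).coeff, fun n _ => hxB i n, ?_⟩
        show seriesOf K i0 ((x i).coeff) - x i ∈ L i
        rw [hser i, sub_self]
        exact (hL i).1.1.1
      have hCcl : ∀ i, IsClosed (C i) := by
        intro i
        rw [← isOpen_compl_iff, isOpen_iff_mem_nhds]
        intro f hf
        by_cases hfB : f ∈ Bp
        · have hfL : seriesOf K i0 f - x i ∉ L i := fun h => hf ⟨hfB, h⟩
          obtain ⟨U, hU, ⟨N, hN⟩, hsub⟩ := exists_basic K (hL i).1.1.1 (hL i).2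
          rw [mem_nhds_iff]
          refine ⟨⋂ n ∈ Finset.Icc i0 (N - 1), {h : ℤ → K | h n - f n ∈ U n}, ?_, ?_, ?_⟩
          · intro h hh hhC
            have hdiff : seriesOf K i0 h - seriesOf K i0 f ∈ L i := by
              apply hsub
              intro n
              show (seriesOf K i0 h - seriesOf K i0 f).coeff n ∈ U n
              rw [HahnSeries.coeff_sub, seriesOf_coeff, seriesOf_coeff]
              by_cases h1 : N ≤ n
              · rw [hN n h1]; trivial
              by_cases h2 : n < i0
              · rw [if_pos h2, if_pos h2, sub_self]; exact (hU n).2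
              · rw [if_neg h2, if_neg h2]
                exact Set.mem_iInter₂.mp hh n (Finset.mem_Icc.mpr ⟨not_lt.1 h2, by omega⟩)
            have hcon : seriesOf K i0 f - x i ∈ L i := by
              have h4 := (hL i).1.1.sub_mem' K hhC.2 hdiff
              rwa [sub_sub_sub_cancel_left] at h4
            exact hfL hcon
          · exact isOpen_biInter_finset fun n _ =>
              ((continuous_apply n).sub continuous_const).isOpen_preimage _ (hU n).1
          · exact Set.mem_iInter₂.mpr fun n _ => by simpa using (hU n).2
        · have hBpcl : IsClosed Bp := isClosed_set_pi fun n _ =>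
            (isCompact_pT K hK.one_lt_q hK.locallyCompact (k n)).isClosed
          rw [mem_nhds_iff]
          exact ⟨Bpᶜ, fun h hh hhC => hh hhC.1, hBpcl.isOpen_compl, hfB⟩
      have hCdir : Directed (· ⊇ ·) C := by
        intro i j
        obtain ⟨l, h1, h2⟩ := hdir i j
        exact ⟨l, hsubC i l h1, hsubC j l h2⟩
      obtain ⟨g, hg⟩ := IsCompact.nonempty_iInter_of_directed_nonempty_isCompact_isClosed
        C hCdir hCne
        (fun i => hBpc.of_isClosed_subset (hCcl i) Set.inter_subset_left) hCcl
      have hgB : g ∈ Bp := (Set.mem_iInter.mp hg (Classical.arbitrary ι)).1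
      refine ⟨seriesOf K i0 g, ?_, fun i => (Set.mem_iInter.mp hg i).2⟩
      intro n
      show (seriesOf K i0 g).coeff n ∈ pT K q (k n)
      rw [seriesOf_coeff]
      split
      · exact zero_mem_pT K hK.one_lt_q (k n)
      · exact hgB n (Set.mem_univ n)
    · refine ⟨0, ?_, fun i => (hι ⟨i⟩).elim⟩
      intro n
      show (0 : LaurentSeries K).coeff n ∈ pT K q (k n)
      rw [HahnSeries.coeff_zero]
      exact zero_mem_pT K hK.one_lt_q (k n)

end TwoDimLF
end
end
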